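/- arXiv:1010.0829 — 8 statements merged into one kernel-verified Lean document; each statement's English description precedes it below -/
import Mathlib

section
/- Let f_{tT}(y;z) = (1/√(2π)) (c t (T−t)/T) · exp(−(c²(Ty−tz)²)/(2 y z (z−y))) / (y − y²/z)^{3/2} for 0 < y < z (the marginal density of a stable-1/2 bridge from 0 at time 0 to z > 0 at time T, with activity parameter c > 0, at time t ∈ (0,T)). Then for y ∈ (0,z), ∫₀^y f_{tT}(u;z) du = Φ(c(Ty−tz)/√(yz(z−y))) + (1 − 2t/T) e^{2c²t(T−t)/z} Φ(c((2t−T)y−tz)/√(yz(z−y))). -/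
open MeasureTheory Real Set
open Filter Topology

/-- Standard normal cumulative distribution function. -/
noncomputable def Phi (x : ℝ) : ℝ :=
  (Real.sqrt (2 * Real.pi))⁻¹ * ∫ u in Set.Iic x, Real.exp (-(u ^ 2) / 2)

/-- Marginal density at time `t` of the stable-1/2 bridge from `0` at time `0` to `z` at
time `T`, with activity parameter `c`. -/
noncomputable def stableBridgeDen (c T t z y : ℝ) : ℝ :=
  (1 / Real.sqrt (2 * Real.pi)) * (c * t * (T - t) / T) *
    (Real.exp (-(c ^ 2 * (T * y - t * z) ^ 2) / (2 * y * z * (z - y))) /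
      (y - y ^ 2 / z) ^ ((3 : ℝ) / 2))


lemma gauss_integrable : Integrable (fun u : ℝ => Real.exp (-(u ^ 2) / 2)) := by
  have h := integrable_exp_neg_mul_sq (by norm_num : (0:ℝ) < 1/2)
  have e : (fun x : ℝ => Real.exp (-(1/2) * x ^ 2)) = fun u : ℝ => Real.exp (-(u ^ 2) / 2) := by
    funext u; ring_nf
  rwa [e] at h

lemma Phi_hasDerivAt (x : ℝ) :
    HasDerivAt Phi ((Real.sqrt (2 * Real.pi))⁻¹ * Real.exp (-(x ^ 2) / 2)) x := by
  have key : ∀ b : ℝ, (∫ u in Set.Iic b, Real.exp (-(u ^ 2) / 2))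
      = (∫ u in Set.Iic (0:ℝ), Real.exp (-(u ^ 2) / 2))
        + ∫ u in (0:ℝ)..b, Real.exp (-(u ^ 2) / 2) := by
    intro b
    rw [← intervalIntegral.integral_Iic_sub_Iic gauss_integrable.integrableOn
      gauss_integrable.integrableOn]
    ring
  have hc : Continuous fun u : ℝ => Real.exp (-(u ^ 2) / 2) := by fun_prop
  have hd : HasDerivAt (fun b => ∫ u in (0:ℝ)..b, Real.exp (-(u ^ 2) / 2))
      (Real.exp (-(x ^ 2) / 2)) x :=
    intervalIntegral.integral_hasDerivAt_right
      (gauss_integrable.intervalIntegrable)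
      (hc.stronglyMeasurable.stronglyMeasurableAtFilter)
      hc.continuousAt
  have := ((hd.const_add (∫ u in Set.Iic (0:ℝ), Real.exp (-(u ^ 2) / 2))).const_mul (Real.sqrt (2 * Real.pi))⁻¹)
  have hfun : Phi = fun b => (Real.sqrt (2 * Real.pi))⁻¹ *
      ((∫ u in Set.Iic (0:ℝ), Real.exp (-(u ^ 2) / 2)) + ∫ u in (0:ℝ)..b, Real.exp (-(u ^ 2) / 2)) := by
    funext b; rw [Phi, key]
  rw [hfun]
  exact this

lemma Phi_tendsto_atBot : Tendsto Phi atBot (𝓝 0) := by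
  have h : Tendsto (fun n : ℝ => ∫ u in Set.Iic (-n), Real.exp (-(u ^ 2) / 2)) atTop
      (𝓝 (∫ u in ⋂ n : ℝ, Set.Iic (-n), Real.exp (-(u ^ 2) / 2))) := by
    refine tendsto_setIntegral_of_antitone (fun n => measurableSet_Iic) ?_ ⟨0, gauss_integrable.integrableOn⟩
    intro a b hab x hx
    simp only [Set.mem_Iic] at hx ⊢
    linarith
  have hempty : (⋂ n : ℝ, Set.Iic (-n)) = ∅ := by
    ext x; simp only [Set.mem_iInter, Set.mem_Iic, Set.mem_empty_iff_false, iff_false, not_forall]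
    exact ⟨-(x-1), by push_neg; linarith⟩
  rw [hempty] at h
  simp only [Measure.restrict_empty, integral_zero_measure] at h
  have h2 : Tendsto (fun x : ℝ => ∫ u in Set.Iic x, Real.exp (-(u ^ 2) / 2)) atBot (𝓝 0) := by
    have := h.comp tendsto_neg_atBot_atTop
    simp only [Function.comp_def] at this
    convert this using 2 with x
    simp [Function.comp]
  have : Tendsto Phi atBot (𝓝 ((Real.sqrt (2 * Real.pi))⁻¹ * 0)) := h2.const_mul _
  simpa using this

lemma F_hasDerivAt (c T t z : ℝ) (hc : 0 < c) (ht : 0 < t) (htT : t < T) (hz : 0 < z)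
    (u : ℝ) (hu : u ∈ Set.Ioo 0 z) :
    HasDerivAt (fun v => Phi (c * (T * v - t * z) / Real.sqrt (v * z * (z - v)))
        + (1 - 2 * t / T) * Real.exp (2 * c ^ 2 * t * (T - t) / z) *
            Phi (c * ((2 * t - T) * v - t * z) / Real.sqrt (v * z * (z - v))))
      (stableBridgeDen c T t z u) u := by
  obtain ⟨hu0, huz⟩ := hu
  have hT : 0 < T := ht.trans htT
  have hzu : (0:ℝ) < z - u := sub_pos.2 huz
  have hA : 0 < u * z * (z - u) := by positivity
  have hspos : 0 < Real.sqrt (u * z * (z - u)) := Real.sqrt_pos.2 hA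
  set s := Real.sqrt (u * z * (z - u)) with hs
  have hs2 : s ^ 2 = u * z * (z - u) := Real.sq_sqrt hA.le
  -- derivative of the inner polynomial
  have hpoly : HasDerivAt (fun v => v * z * (z - v)) (z * z - 2 * z * u) u := by
    have h := ((hasDerivAt_id u).mul_const z).mul ((hasDerivAt_const u z).sub (hasDerivAt_id u))
    simp only [id_eq] at h
    exact h.congr_deriv (by simp only [Pi.sub_apply, id_eq]; ring)
  have hg : HasDerivAt (fun v => Real.sqrt (v * z * (z - v))) ((z * z - 2 * z * u) / (2 * s)) u := by
    have H := (Real.hasDerivAt_sqrt hA.ne').comp u hpoly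
    simp only [Function.comp_def] at H
    exact H.congr_deriv (by rw [hs]; ring)
  have num1 : HasDerivAt (fun v => c * (T * v - t * z)) (c * T) u := by
    have h := (((hasDerivAt_id u).const_mul T).sub_const (t * z)).const_mul c
    exact h.congr_deriv (by ring)
  have num2 : HasDerivAt (fun v => c * ((2 * t - T) * v - t * z)) (c * (2 * t - T)) u := by
    have h := (((hasDerivAt_id u).const_mul (2 * t - T)).sub_const (t * z)).const_mul c
    exact h.congr_deriv (by ring)
  have h1d : HasDerivAt (fun v => c * (T * v - t * z) / Real.sqrt (v * z * (z - v)))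
      ((c * T * s - c * (T * u - t * z) * ((z * z - 2 * z * u) / (2 * s))) / s ^ 2) u :=
    num1.div hg hspos.ne'
  have h2d : HasDerivAt (fun v => c * ((2 * t - T) * v - t * z) / Real.sqrt (v * z * (z - v)))
      ((c * (2 * t - T) * s - c * ((2 * t - T) * u - t * z) * ((z * z - 2 * z * u) / (2 * s))) / s ^ 2) u :=
    num2.div hg hspos.ne'
  have P1 := (Phi_hasDerivAt (c * (T * u - t * z) / s)).comp u h1d
  have P2 := (Phi_hasDerivAt (c * ((2 * t - T) * u - t * z) / s)).comp u h2d
  simp only [Function.comp_def] at P1 P2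
  have P2' := P2.const_mul ((1 - 2 * t / T) * Real.exp (2 * c ^ 2 * t * (T - t) / z))
  have total := P1.add P2'
  refine total.congr_deriv (Eq.symm ?_)
  -- now the value identity
  have hX1 : (c * (T * u - t * z) / s) ^ 2 = c ^ 2 * (T * u - t * z) ^ 2 / (u * z * (z - u)) := by
    rw [div_pow, hs2]; ring
  have hX2 : (c * ((2 * t - T) * u - t * z) / s) ^ 2
      = c ^ 2 * ((2 * t - T) * u - t * z) ^ 2 / (u * z * (z - u)) := by
    rw [div_pow, hs2]; ring
  have hexp : Real.exp (2 * c ^ 2 * t * (T - t) / z)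
        * Real.exp (-((c * ((2 * t - T) * u - t * z) / s) ^ 2) / 2)
      = Real.exp (-((c * (T * u - t * z) / s) ^ 2) / 2) := by
    rw [← Real.exp_add]; congr 1
    rw [hX1, hX2]
    field_simp
    ring
  have hexp0 : Real.exp (-(c ^ 2 * (T * u - t * z) ^ 2) / (2 * u * z * (z - u)))
      = Real.exp (-((c * (T * u - t * z) / s) ^ 2) / 2) := by
    rw [hX1]
    congr 1
    rw [neg_div, neg_div, div_div]
    congr 1
    ring
  have hBr : (u - u ^ 2 / z) ^ ((3 : ℝ) / 2) = (u * z * (z - u)) * s / z ^ 3 := by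
    have e1 : u - u ^ 2 / z = (u * z * (z - u)) / z ^ 2 := by field_simp
    have e2 : ((u * z * (z - u)) : ℝ) ^ ((3 : ℝ) / 2) = (u * z * (z - u)) * s := by
      rw [show (3:ℝ)/2 = 1 + 1/2 by norm_num, Real.rpow_add hA, Real.rpow_one,
        ← Real.sqrt_eq_rpow]
    have e3 : ((z ^ 2 : ℝ)) ^ ((3 : ℝ) / 2) = z ^ 3 := by
      rw [← Real.rpow_natCast z 2, ← Real.rpow_mul hz.le, ← Real.rpow_natCast z 3]
      norm_num
    rw [e1, Real.div_rpow hA.le (by positivity), e2, e3]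
  have key : ∀ a b : ℝ, (a * s - b * ((z * z - 2 * z * u) / (2 * s))) / s ^ 2
      = (2 * a * (u * z * (z - u)) - b * (z * z - 2 * z * u)) / (2 * (u * z * (z - u)) * s) := by
    intro a b
    rw [← hs2]
    field_simp
  rw [stableBridgeDen, hexp0, hBr, key (c * T) (c * (T * u - t * z)),
    key (c * (2 * t - T)) (c * ((2 * t - T) * u - t * z)), one_div]
  set C := (Real.sqrt (2 * Real.pi))⁻¹ with hC
  set E1 := Real.exp (-((c * (T * u - t * z) / s) ^ 2) / 2) with hE1
  set E2 := Real.exp (-((c * ((2 * t - T) * u - t * z) / s) ^ 2) / 2) with hE2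
  set a := Real.exp (2 * c ^ 2 * t * (T - t) / z) with ha
  set Q1 := (2 * (c * T) * (u * z * (z - u)) - c * (T * u - t * z) * (z * z - 2 * z * u))
      / (2 * (u * z * (z - u)) * s) with hQ1
  set Q2 := (2 * (c * (2 * t - T)) * (u * z * (z - u))
      - c * ((2 * t - T) * u - t * z) * (z * z - 2 * z * u)) / (2 * (u * z * (z - u)) * s) with hQ2
  have hQ : Q1 + (1 - 2 * t / T) * Q2
      = c * t * (T - t) * z ^ 3 / (T * (u * z * (z - u) * s)) := by
    rw [hQ1, hQ2]
    field_simp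
    ring
  have main : C * E1 * Q1 + (1 - 2 * t / T) * a * (C * E2 * Q2)
      = C * E1 * (c * t * (T - t) * z ^ 3 / (T * (u * z * (z - u) * s))) := by
    calc C * E1 * Q1 + (1 - 2 * t / T) * a * (C * E2 * Q2)
        = C * E1 * Q1 + (1 - 2 * t / T) * C * Q2 * (a * E2) := by ring
      _ = C * E1 * Q1 + (1 - 2 * t / T) * C * Q2 * E1 := by rw [hexp]
      _ = C * E1 * (Q1 + (1 - 2 * t / T) * Q2) := by ring
      _ = _ := by rw [hQ]
  rw [main]
  field_simp

lemma F_tendsto_zero (c T t z : ℝ) (hc : 0 < c) (ht : 0 < t) (htT : t < T) (hz : 0 < z) :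
    Tendsto (fun u => Phi (c * (T * u - t * z) / Real.sqrt (u * z * (z - u)))
        + (1 - 2 * t / T) * Real.exp (2 * c ^ 2 * t * (T - t) / z) *
            Phi (c * ((2 * t - T) * u - t * z) / Real.sqrt (u * z * (z - u))))
      (𝓝[>] (0:ℝ)) (𝓝 0) := by
  have hsc : Continuous fun u : ℝ => Real.sqrt (u * z * (z - u)) := by fun_prop
  have hden : Tendsto (fun u : ℝ => Real.sqrt (u * z * (z - u))) (𝓝[>] (0:ℝ)) (𝓝[>] 0) := by
    rw [tendsto_nhdsWithin_iff]
    constructor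
    · have := (hsc.tendsto 0).mono_left (nhdsWithin_le_nhds (s := Set.Ioi (0:ℝ)))
      simpa using this
    · filter_upwards [Ioo_mem_nhdsGT_of_mem (by constructor <;> simp [hz] : (0:ℝ) ∈ Set.Ico 0 z)]
        with x hx
      have h1 : 0 < x * z * (z - x) := by
        have := hx.1; have := hx.2; have : 0 < z - x := by linarith
        positivity
      exact Real.sqrt_pos.2 h1
  have hinv : Tendsto (fun u : ℝ => (Real.sqrt (u * z * (z - u)))⁻¹) (𝓝[>] (0:ℝ)) atTop :=
    tendsto_inv_nhdsGT_zero.comp hden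
  have harg : ∀ b : ℝ, Tendsto (fun u : ℝ => c * (b * u - t * z) / Real.sqrt (u * z * (z - u)))
      (𝓝[>] (0:ℝ)) atBot := by
    intro b
    have hnum : Tendsto (fun u : ℝ => c * (b * u - t * z)) (𝓝[>] (0:ℝ)) (𝓝 (c * (b * 0 - t * z))) := by
      have hcont : Continuous fun u : ℝ => c * (b * u - t * z) := by fun_prop
      exact (hcont.tendsto 0).mono_left nhdsWithin_le_nhds
    have hneg : c * (b * 0 - t * z) < 0 := by
      have : (0:ℝ) < t * z := by positivity
      have : b * 0 - t * z < 0 := by simpa using by linarith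
      exact mul_neg_of_pos_of_neg hc this
    have := Filter.Tendsto.neg_mul_atTop hneg hnum hinv
    simpa [div_eq_mul_inv] using this
  have P1 := Phi_tendsto_atBot.comp (harg T)
  have P2 := Phi_tendsto_atBot.comp (harg (2 * t - T))
  simp only [Function.comp_def] at P1 P2
  have := P1.add (P2.const_mul ((1 - 2 * t / T) * Real.exp (2 * c ^ 2 * t * (T - t) / z)))
  simpa using this

/-- Distribution function of the stable-1/2 bridge marginal. -/
theorem stable_half_bridge_distribution_function (c T t z : ℝ)
    (hc : 0 < c) (ht : 0 < t) (htT : t < T) (hz : 0 < z)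
    (y : ℝ) (hy : y ∈ Set.Ioo 0 z) :
    (∫ u in Set.Ioo (0 : ℝ) y, stableBridgeDen c T t z u)
      = Phi (c * (T * y - t * z) / Real.sqrt (y * z * (z - y)))
        + (1 - 2 * t / T) * Real.exp (2 * c ^ 2 * t * (T - t) / z) *
            Phi (c * ((2 * t - T) * y - t * z) / Real.sqrt (y * z * (z - y))) := by
  obtain ⟨hy0, hyz⟩ := hy
  set F : ℝ → ℝ := fun v => Phi (c * (T * v - t * z) / Real.sqrt (v * z * (z - v)))
      + (1 - 2 * t / T) * Real.exp (2 * c ^ 2 * t * (T - t) / z) *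
          Phi (c * ((2 * t - T) * v - t * z) / Real.sqrt (v * z * (z - v))) with hF
  set G : ℝ → ℝ := fun v => if v ≤ 0 then 0 else F v with hG
  have hGF : ∀ v : ℝ, 0 < v → G v = F v := by
    intro v hv; simp [hG, not_le.2 hv]
  have hGeq : ∀ᶠ v in 𝓝[>] (0:ℝ), G v = F v := by
    filter_upwards [self_mem_nhdsWithin] with v hv
    exact hGF v hv
  -- continuity of G on [0, y]
  have hcont : ContinuousOn G (Set.Icc 0 y) := by
    intro x hx
    rcases eq_or_lt_of_le hx.1 with h0 | h0
    · -- x = 0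
      subst h0
      have hG0 : G 0 = 0 := by simp [hG]
      rw [ContinuousWithinAt, hG0]
      have hmono : 𝓝[Set.Icc (0:ℝ) y] 0 ≤ 𝓝[Set.Ici (0:ℝ)] 0 :=
        nhdsWithin_mono _ (Set.Icc_subset_Ici_self)
    -- split Ici into {0} ∪ Ioi
      refine Filter.Tendsto.mono_left ?_ hmono
      have hsplit : Set.Ici (0:ℝ) = {0} ∪ Set.Ioi 0 := by
        ext v; simp [Set.mem_Ici, Set.mem_Ioi, le_iff_lt_or_eq, or_comm, eq_comm]
      rw [hsplit, nhdsWithin_union]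
      rw [Filter.tendsto_sup]
      constructor
      · rw [nhdsWithin_singleton]
        simpa [hG0] using tendsto_pure_nhds G 0
      · exact ((F_tendsto_zero c T t z hc ht htT hz).congr'
          (hGeq.mono fun v hv => hv.symm))
    · -- x > 0
      have hFc : ContinuousAt F x :=
        (F_hasDerivAt c T t z hc ht htT hz x ⟨h0, lt_of_le_of_lt hx.2 hyz⟩).continuousAt
      have : ContinuousAt G x := by
        refine hFc.congr ?_
        filter_upwards [Ioi_mem_nhds h0] with v hv
        exact (hGF v hv).symm
      exact this.continuousWithinAt
  have hderiv : ∀ x ∈ Set.Ioo (0:ℝ) y, HasDerivAt G (stableBridgeDen c T t z x) x := by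
    intro x hx
    have hFd := F_hasDerivAt c T t z hc ht htT hz x ⟨hx.1, lt_trans hx.2 hyz⟩
    refine hFd.congr_of_eventuallyEq ?_
    filter_upwards [Ioi_mem_nhds hx.1] with v hv
    exact hGF v hv
  have hnonneg : ∀ x ∈ Set.Ioo (0:ℝ) y, 0 ≤ stableBridgeDen c T t z x := by
    intro x hx
    have hx0 := hx.1
    have hxz : x < z := lt_trans hx.2 hyz
    have hB : 0 ≤ x - x ^ 2 / z := by
      rw [show x - x ^ 2 / z = x * (z - x) / z by field_simp]
      have : 0 < z - x := by linarith
      positivity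
    have hT : 0 < T := ht.trans htT
    rw [stableBridgeDen]
    have h1 : (0:ℝ) ≤ 1 / Real.sqrt (2 * Real.pi) := by positivity
    have h2 : (0:ℝ) ≤ c * t * (T - t) / T := by
      have : (0:ℝ) < T - t := by linarith
      positivity
    have h3 : (0:ℝ) ≤ Real.exp (-(c ^ 2 * (T * x - t * z) ^ 2) / (2 * x * z * (z - x)))
        / (x - x ^ 2 / z) ^ ((3:ℝ)/2) := by
      apply div_nonneg (Real.exp_pos _).le
      exact Real.rpow_nonneg hB _
    positivity
  have hint : IntegrableOn (fun x => stableBridgeDen c T t z x) (Set.Ioc 0 y) :=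
    intervalIntegral.integrableOn_deriv_of_nonneg hcont hderiv hnonneg
  have hftc : ∫ x in (0:ℝ)..y, stableBridgeDen c T t z x = G y - G 0 :=
    intervalIntegral.integral_eq_sub_of_hasDeriv_right_of_le hy0.le hcont
      (fun x hx => (hderiv x hx).hasDerivWithinAt)
      ((intervalIntegrable_iff_integrableOn_Ioc_of_le hy0.le).2 hint)
  have hGy : G y = F y := hGF y hy0
  have hG0 : G 0 = 0 := by simp [hG]
  rw [← MeasureTheory.integral_Ioc_eq_integral_Ioo, ← intervalIntegral.integral_of_le hy0.le,
    hftc, hGy, hG0, sub_zero]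
end

section
/- With the stable-1/2 bridge density f_{tT}(y;z) as above, the second moment is ∫₀^z y² f_{tT}(y;z) dy = (t/T) z² { 1 − c(T−t) e^{c²T²/(2z)} √(2π/z) Φ(−cT z^{-1/2}) }. -/
open MeasureTheory Real Set
open Filter

lemma gauss_total : ∫ x : ℝ, Real.exp (-(x^2)/2) = Real.sqrt (2*π) := by
  have h := integral_gaussian (1/2 : ℝ)
  simp only [neg_div] at h ⊢
  rw [show (π / (1/2) : ℝ) = 2*π by ring] at h
  rw [← h]
  congr 1 with x
  ring_nf

lemma integrable_gauss : Integrable (fun x : ℝ => Real.exp (-(x^2)/2)) := by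
  have := integrable_exp_neg_mul_sq (b := 1/2) (by norm_num)
  convert this using 2 with x
  ring_nf

lemma tail_eq (x : ℝ) : ∫ w in Ioi x, Real.exp (-(w^2)/2) = Real.sqrt (2*π) * Phi (-x) := by
  have h := integral_comp_neg_Iic (-x) (fun w => Real.exp (-(w^2)/2))
  simp only [neg_neg, neg_sq] at h
  rw [Phi, ← h, ← mul_assoc, mul_inv_cancel₀ (by positivity : Real.sqrt (2*π) ≠ 0), one_mul]


lemma gauss_shift (a c : ℝ) :
    ∫ v in Ioi c, Real.exp (-((v+a)^2)/2) = Real.sqrt (2*π) * Phi (-(c+a)) := by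
  have key := integral_image_eq_integral_abs_deriv_smul (f := fun v => v + a)
    (f' := fun _ => (1:ℝ)) (s := Ioi c) measurableSet_Ioi
    (fun x _ => ((hasDerivAt_id x).add_const a).hasDerivWithinAt)
    (add_left_injective a).injOn (fun x => Real.exp (-(x^2)/2))
  rw [image_add_const_Ioi] at key
  simp only [abs_one, one_smul] at key
  rw [← tail_eq, ← key]

lemma integrable_gauss_shift (a : ℝ) :
    Integrable (fun v : ℝ => Real.exp (-((v+a)^2)/2)) :=
  integrable_gauss.comp_add_right a

set_option maxHeartbeats 1000000 in
lemma ig (a b : ℝ) (ha : 0 < a) (hb : 0 < b) :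
    IntegrableOn (fun u : ℝ => (1/(u*Real.sqrt u)) * Real.exp (-(a/u + b*u)/2)) (Ioi 0) ∧
    (∫ u in Ioi (0:ℝ), (1/(u*Real.sqrt u)) * Real.exp (-(a/u + b*u)/2))
      = Real.sqrt (2*π/a) * Real.exp (-Real.sqrt (a*b)) := by
  set sa := Real.sqrt a with hsa_def
  set sb := Real.sqrt b with hsb_def
  have hsa : 0 < sa := Real.sqrt_pos.2 ha
  have hsb : 0 < sb := Real.sqrt_pos.2 hb
  have hsa2 : sa^2 = a := Real.sq_sqrt ha.le
  have hsb2 : sb^2 = b := Real.sq_sqrt hb.le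
  have hab : Real.sqrt (a*b) = sa * sb := Real.sqrt_mul ha.le b
  set E : ℝ → ℝ := fun u => Real.exp (-(a/u + b*u)/2) with hE_def
  set w : ℝ → ℝ := fun u => sb * Real.sqrt u - sa / Real.sqrt u with hw_def
  set w' : ℝ → ℝ := fun u => sb/(2*Real.sqrt u) + sa/(2*(u*Real.sqrt u)) with hw'_def
  have hderiv : ∀ u ∈ Ioi (0:ℝ), HasDerivWithinAt w (w' u) (Ioi 0) u := by
    intro u hu
    have hu0 : (0:ℝ) < u := hu
    have hsu : 0 < Real.sqrt u := Real.sqrt_pos.2 hu0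
    have hsq : (Real.sqrt u)^2 = u := Real.sq_sqrt hu0.le
    have h1 : HasDerivAt Real.sqrt (1/(2*Real.sqrt u)) u := Real.hasDerivAt_sqrt hu0.ne'
    have h2 : HasDerivAt (fun x => sb * Real.sqrt x) (sb * (1/(2*Real.sqrt u))) u :=
      h1.const_mul sb
    have h3 : HasDerivAt (fun x => sa / Real.sqrt x)
        ((0 * Real.sqrt u - sa * (1/(2*Real.sqrt u)))/(Real.sqrt u)^2) u :=
      (hasDerivAt_const u sa).div h1 hsu.ne'
    have h4 := h2.sub h3
    refine (h4.congr_deriv ?_).hasDerivWithinAt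
    rw [hsq, hw'_def]
    simp only [zero_mul, zero_sub, neg_div, mul_one_div, sub_neg_eq_add, div_div]
    ring_nf
  have hmono : StrictMonoOn w (Ioi 0) := by
    intro x hx y hy hxy
    have hsx : 0 < Real.sqrt x := Real.sqrt_pos.2 hx
    have hsy : 0 < Real.sqrt y := Real.sqrt_pos.2 hy
    have h1 : Real.sqrt x < Real.sqrt y := Real.sqrt_lt_sqrt (le_of_lt hx) hxy
    have h2 : sb * Real.sqrt x < sb * Real.sqrt y := by nlinarith
    have h3 : sa / Real.sqrt y < sa / Real.sqrt x := div_lt_div_of_pos_left hsa hsx h1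
    exact sub_lt_sub h2 h3
  have hinj : InjOn w (Ioi 0) := hmono.injOn
  have himg : w '' (Ioi 0) = univ := by
    apply eq_univ_of_forall
    intro x
    set d := Real.sqrt (x^2 + 4*sa*sb) with hd_def
    have hd0 : 0 ≤ d := Real.sqrt_nonneg _
    have hd2 : d^2 = x^2 + 4*sa*sb := Real.sq_sqrt (by nlinarith)
    have hdx : -x < d := by nlinarith
    have hxd : 0 < x + d := by linarith
    set s := (x+d)/(2*sb) with hs_def
    have hs : 0 < s := div_pos hxd (by linarith)
    refine ⟨s^2, mem_Ioi.2 (by positivity), ?_⟩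
    have hss : Real.sqrt (s^2) = s := Real.sqrt_sq hs.le
    show sb * Real.sqrt (s^2) - sa / Real.sqrt (s^2) = x
    rw [hss, hs_def]
    have hsb' : (2:ℝ)*sb ≠ 0 := by positivity
    field_simp
    nlinarith [hd2, hxd]
  -- main substitution
  have key := integral_image_eq_integral_abs_deriv_smul measurableSet_Ioi hderiv hinj
      (fun x => Real.exp (-(x^2)/2))
  rw [himg, Measure.restrict_univ, gauss_total] at key
  have keyInt0 : IntegrableOn (fun u => |w' u| • Real.exp (-(w u)^2/2)) (Ioi 0) := by
    refine (integrableOn_image_iff_integrableOn_abs_deriv_smul measurableSet_Ioi hderiv hinj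
      (fun x => Real.exp (-(x^2)/2))).1 ?_
    rw [himg]
    exact integrable_gauss.integrableOn
  have hpt : ∀ u ∈ Ioi (0:ℝ), |w' u| • Real.exp (-(w u)^2/2)
      = Real.exp (sa*sb) * ((sb/2) * ((1/Real.sqrt u) * E u)
          + (sa/2) * ((1/(u*Real.sqrt u)) * E u)) := by
    intro u hu
    have hu0 : (0:ℝ) < u := hu
    have hsu : 0 < Real.sqrt u := Real.sqrt_pos.2 hu0
    have hsq' : Real.sqrt u * Real.sqrt u = u := Real.mul_self_sqrt hu0.le
    have hw'pos : 0 < w' u := by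
      simp only [hw'_def]
      positivity
    rw [abs_of_pos hw'pos, smul_eq_mul]
    have hsq : Real.sqrt u^2 = u := Real.sq_sqrt hu0.le
    have hexp : -(w u)^2/2 = sa*sb + (-(a/u + b*u)/2) := by
      have h5 : a/u = (sa/Real.sqrt u)^2 := by rw [div_pow, hsa2, hsq]
      have h6 : b*u = (sb*Real.sqrt u)^2 := by rw [mul_pow, hsb2, hsq]
      have h7 : sb*Real.sqrt u*(sa/Real.sqrt u) = sa*sb := by
        field_simp
      simp only [hw_def]
      rw [h5, h6]
      linear_combination h7
    rw [hexp, Real.exp_add]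
    simp only [hE_def, hw'_def]
    ring
  have hEcont : ContinuousOn E (Ioi 0) := by
    apply Real.continuous_exp.comp_continuousOn
    apply ContinuousOn.div_const
    apply ContinuousOn.neg
    exact (continuousOn_const.div continuousOn_id (fun x hx => ne_of_gt hx)).add
      (continuous_const.mul continuous_id).continuousOn
  have hg1cont : ContinuousOn (fun u => (1/Real.sqrt u) * E u) (Ioi 0) := by
    refine ContinuousOn.mul ?_ hEcont
    refine continuousOn_const.div Real.continuous_sqrt.continuousOn ?_
    intro x hx
    exact (Real.sqrt_pos.2 hx).ne'
  have hg2cont : ContinuousOn (fun u => (1/(u*Real.sqrt u)) * E u) (Ioi 0) := by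
    refine ContinuousOn.mul ?_ hEcont
    refine continuousOn_const.div (continuousOn_id.mul Real.continuous_sqrt.continuousOn) ?_
    intro x hx
    have hx0 : (0:ℝ) < x := hx
    have : 0 < x * Real.sqrt x := by positivity
    exact this.ne'
  set S : ℝ → ℝ := fun u => Real.exp (sa*sb) * ((sb/2) * ((1/Real.sqrt u) * E u)
      + (sa/2) * ((1/(u*Real.sqrt u)) * E u)) with hS_def
  have keyInt : IntegrableOn S (Ioi 0) := keyInt0.congr_fun hpt measurableSet_Ioi
  have hboundS : ∀ u ∈ Ioi (0:ℝ), (sb/2) * ((1/Real.sqrt u) * E u) ≤ S u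
      ∧ (sa/2) * ((1/(u*Real.sqrt u)) * E u) ≤ S u := by
    intro u hu
    have hu0 : (0:ℝ) < u := hu
    have hsu : 0 < Real.sqrt u := Real.sqrt_pos.2 hu0
    have hEpos : 0 < E u := Real.exp_pos _
    have h1 : 0 ≤ (sb/2) * ((1/Real.sqrt u) * E u) := by positivity
    have h2 : 0 ≤ (sa/2) * ((1/(u*Real.sqrt u)) * E u) := by positivity
    have hexp1 : 1 ≤ Real.exp (sa*sb) := Real.one_le_exp (by positivity)
    constructor
    · calc (sb/2) * ((1/Real.sqrt u) * E u)
          ≤ (sb/2) * ((1/Real.sqrt u) * E u) + (sa/2) * ((1/(u*Real.sqrt u)) * E u) := by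
            linarith
        _ ≤ S u := by
            rw [hS_def]
            exact le_mul_of_one_le_left (by linarith) hexp1
    · calc (sa/2) * ((1/(u*Real.sqrt u)) * E u)
          ≤ (sb/2) * ((1/Real.sqrt u) * E u) + (sa/2) * ((1/(u*Real.sqrt u)) * E u) := by
            linarith
        _ ≤ S u := by
            rw [hS_def]
            exact le_mul_of_one_le_left (by linarith) hexp1
  have hg1int : IntegrableOn (fun u => (1/Real.sqrt u) * E u) (Ioi 0) := by
    refine Integrable.mono (keyInt.const_mul (2/sb)) (hg1cont.aestronglyMeasurable measurableSet_Ioi) ?_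
    filter_upwards [ae_restrict_mem measurableSet_Ioi] with u hu
    have hu0 : (0:ℝ) < u := hu
    have hsu : 0 < Real.sqrt u := Real.sqrt_pos.2 hu0
    have hEpos : 0 < E u := Real.exp_pos _
    have hSpos : 0 ≤ S u := le_trans (by positivity) (hboundS u hu).1
    rw [Real.norm_eq_abs, Real.norm_eq_abs, abs_of_nonneg (by positivity), abs_of_nonneg (by positivity)]
    have := (hboundS u hu).1
    rw [show (2/sb * S u) = (2 * S u)/sb by ring, le_div_iff₀ hsb]
    nlinarith
  have hg2int : IntegrableOn (fun u => (1/(u*Real.sqrt u)) * E u) (Ioi 0) := by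
    refine Integrable.mono (keyInt.const_mul (2/sa)) (hg2cont.aestronglyMeasurable measurableSet_Ioi) ?_
    filter_upwards [ae_restrict_mem measurableSet_Ioi] with u hu
    have hu0 : (0:ℝ) < u := hu
    have hsu : 0 < Real.sqrt u := Real.sqrt_pos.2 hu0
    have hEpos : 0 < E u := Real.exp_pos _
    have hSpos : 0 ≤ S u := le_trans (by positivity) (hboundS u hu).2
    rw [Real.norm_eq_abs, Real.norm_eq_abs, abs_of_nonneg (by positivity), abs_of_nonneg (by positivity)]
    have := (hboundS u hu).2
    rw [show (2/sa * S u) = (2 * S u)/sa by ring, le_div_iff₀ hsa]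
    nlinarith
  -- reflection substitution u ↦ a/(b*u)
  have hderiv2 : ∀ u ∈ Ioi (0:ℝ),
      HasDerivWithinAt (fun u => a/(b*u)) (-(a/(b*u^2))) (Ioi 0) u := by
    intro u hu
    have hu0 : (0:ℝ) < u := hu
    have h := (hasDerivAt_const u a).div ((hasDerivAt_id u).const_mul b)
      (by positivity : b*u ≠ 0)
    refine (h.congr_deriv ?_).hasDerivWithinAt
    simp only [id]
    field_simp
    ring
  have hinj2 : InjOn (fun u => a/(b*u)) (Ioi 0) := by
    intro x hx y hy h
    have hx0 : (0:ℝ) < x := hx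
    have hy0 : (0:ℝ) < y := hy
    rw [div_eq_div_iff (by positivity) (by positivity)] at h
    have h2 : b*y = b*x := mul_left_cancel₀ ha.ne' h
    exact (mul_left_cancel₀ hb.ne' h2).symm
  have himg2 : (fun u => a/(b*u)) '' (Ioi 0) = Ioi 0 := by
    ext x
    simp only [mem_image, mem_Ioi]
    constructor
    · rintro ⟨u, hu, rfl⟩
      positivity
    · intro hx
      refine ⟨a/(b*x), by positivity, ?_⟩
      field_simp
  have key2 := integral_image_eq_integral_abs_deriv_smul (s := Ioi 0) measurableSet_Ioi
      hderiv2 hinj2 (fun u => (1/Real.sqrt u) * E u)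
  rw [himg2] at key2
  have hpt2 : ∀ u ∈ Ioi (0:ℝ), |(-(a/(b*u^2)))| • ((1/Real.sqrt (a/(b*u))) * E (a/(b*u)))
      = (sa/sb) * ((1/(u*Real.sqrt u)) * E u) := by
    intro u hu
    have hu0 : (0:ℝ) < u := hu
    have hsu : 0 < Real.sqrt u := Real.sqrt_pos.2 hu0
    have hsq' : Real.sqrt u * Real.sqrt u = u := Real.mul_self_sqrt hu0.le
    have hEeq : E (a/(b*u)) = E u := by
      simp only [hE_def]
      congr 1
      have e1 : a/(a/(b*u)) = b*u := by field_simp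
      have e2 : b*(a/(b*u)) = a/u := by
        field_simp
      rw [e1, e2]
      ring
    have hsqrt : Real.sqrt (a/(b*u)) = sa/(sb*Real.sqrt u) := by
      rw [Real.sqrt_div ha.le, Real.sqrt_mul hb.le]
    have habs : |(-(a/(b*u^2)))| = a/(b*u^2) := by
      rw [abs_neg, abs_of_pos (by positivity)]
    rw [habs, hEeq, hsqrt, smul_eq_mul]
    rw [← hsa2, ← hsb2]
    field_simp
    rw [Real.sq_sqrt hu0.le]
  rw [setIntegral_congr_fun measurableSet_Ioi hpt2] at key2
  rw [integral_const_mul] at key2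
  -- assemble
  have hptS : EqOn (fun u => |w' u| • Real.exp (-(w u)^2/2)) S (Ioi 0) := by
    intro u hu
    exact hpt u hu
  rw [setIntegral_congr_fun measurableSet_Ioi hptS] at key
  have hsplit : ∫ u in Ioi 0, S u
      = Real.exp (sa*sb) * ((sb/2) * (∫ u in Ioi (0:ℝ), (1/Real.sqrt u) * E u)
          + (sa/2) * (∫ u in Ioi (0:ℝ), (1/(u*Real.sqrt u)) * E u)) := by
    rw [hS_def, integral_const_mul,
      integral_add (hg1int.const_mul (sb/2)) (hg2int.const_mul (sa/2)),
      integral_const_mul, integral_const_mul]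
  refine ⟨hg2int, ?_⟩
  set J2 : ℝ := ∫ u in Ioi (0:ℝ), (1/(u*Real.sqrt u)) * E u with hJ2_def
  have e3 : (sb/2) * ((sa/sb)*J2) = (sa/2)*J2 := by
    field_simp
  have hfin : Real.sqrt (2*π) = Real.exp (sa*sb) * (sa * J2) := by
    rw [key, hsplit, key2, e3]
    ring
  have hexpne : Real.exp (sa*sb) ≠ 0 := (Real.exp_pos _).ne'
  rw [show (2*π/a : ℝ) = (2*π)/a from rfl, Real.sqrt_div (by positivity) a, hab, Real.exp_neg,
    ← hsa_def]
  rw [eq_comm, div_mul_eq_mul_div, div_eq_iff hsa.ne', inv_eq_one_div, mul_one_div,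
    div_eq_iff hexpne]
  linear_combination hfin
lemma laplace (k : ℝ) (hk : 0 < k) : ∫ s in Ioi (0:ℝ), Real.exp (-(k*s)) = 1/k := by
  have hd : ∀ x ∈ Ici (0:ℝ), HasDerivAt (fun s => -Real.exp (-(k*s))/k) (Real.exp (-(k*x))) x := by
    intro x _
    have h1 : HasDerivAt (fun s : ℝ => -(k*s)) (-k) x := by
      exact (((hasDerivAt_id x).const_mul k).neg).congr_deriv (by ring)
    have h2 := (h1.exp).neg.div_const k
    refine h2.congr_deriv ?_
    field_simp
  have hint : IntegrableOn (fun s => Real.exp (-(k*s))) (Ioi 0) := by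
    have := exp_neg_integrableOn_Ioi 0 hk
    simpa [neg_mul] using this
  have hcomp : Tendsto (fun s : ℝ => -(k*s)) atTop atBot := by
    apply tendsto_neg_atTop_atBot.comp
    exact (tendsto_id.const_mul_atTop hk)
  have htend : Tendsto (fun s => -Real.exp (-(k*s))/k) atTop (nhds 0) := by
    have := ((Real.tendsto_exp_atBot.comp hcomp).neg).div_const k
    simpa using this
  have := integral_Ioi_of_hasDerivAt_of_tendsto' hd hint htend
  rw [this]
  simp
  field_simp

lemma outer (a b : ℝ) (ha : 0 < a) (hb : 0 < b) :
    ∫ s in Ioi (0:ℝ), Real.exp (-s) * Real.exp (-(Real.sqrt a * Real.sqrt (b + 2*s)))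
      = Real.exp (-Real.sqrt (a*b)) - Real.sqrt a * Real.sqrt (2*π) * Real.exp ((a+b)/2)
          * Phi (-(Real.sqrt a + Real.sqrt b)) := by
  set sa := Real.sqrt a with hsa_def
  set sb := Real.sqrt b with hsb_def
  have hsa : 0 < sa := Real.sqrt_pos.2 ha
  have hsb : 0 < sb := Real.sqrt_pos.2 hb
  have hsa2 : sa^2 = a := Real.sq_sqrt ha.le
  have hsb2 : sb^2 = b := Real.sq_sqrt hb.le
  have hab : Real.sqrt (a*b) = sa * sb := Real.sqrt_mul ha.le b
  -- substitution s = (v^2 - b)/2, v ∈ Ioi sb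
  have hderiv : ∀ v ∈ Ioi sb, HasDerivWithinAt (fun v => (v^2 - b)/2) v (Ioi sb) v := by
    intro v _
    have h := ((hasDerivAt_pow 2 v).sub_const b).div_const 2
    refine (h.congr_deriv ?_).hasDerivWithinAt
    simp
  have hinj : InjOn (fun v => (v^2 - b)/2) (Ioi sb) := by
    intro x hx y hy h
    have hx0 : sb < x := hx
    have hy0 : sb < y := hy
    have : x^2 = y^2 := by
      field_simp at h
      linarith
    nlinarith
  have himg : (fun v => (v^2 - b)/2) '' (Ioi sb) = Ioi 0 := by
    ext x
    simp only [mem_image, mem_Ioi]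
    constructor
    · rintro ⟨v, hv, rfl⟩
      have : sb^2 < v^2 := by nlinarith [hsb.trans hv, hsb]
      rw [hsb2] at this
      linarith
    · intro hx
      refine ⟨Real.sqrt (b + 2*x), ?_, ?_⟩
      · rw [hsb_def]
        apply Real.sqrt_lt_sqrt hb.le
        linarith
      · rw [Real.sq_sqrt (by linarith)]
        ring
  have key := integral_image_eq_integral_abs_deriv_smul (s := Ioi sb) measurableSet_Ioi
      hderiv hinj (fun s => Real.exp (-s) * Real.exp (-(sa * Real.sqrt (b + 2*s))))
  rw [himg] at key
  have hpt : ∀ v ∈ Ioi sb, |v| • (Real.exp (-((v^2 - b)/2))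
        * Real.exp (-(sa * Real.sqrt (b + 2*((v^2 - b)/2)))))
      = Real.exp (b/2) * (v * Real.exp (-(v^2)/2 - sa*v)) := by
    intro v hv
    have hv0 : 0 < v := hsb.trans hv
    have h1 : b + 2*((v^2 - b)/2) = v^2 := by ring
    rw [h1, Real.sqrt_sq hv0.le, abs_of_pos hv0, smul_eq_mul, ← Real.exp_add]
    rw [show -((v^2-b)/2) + -(sa*v) = b/2 + (-(v^2)/2 - sa*v) by ring, Real.exp_add]
    ring
  rw [setIntegral_congr_fun measurableSet_Ioi hpt, integral_const_mul] at key
  -- now compute ∫ v in Ioi sb, v * exp(-(v^2)/2 - sa*v)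
  have hgauss_shift_int : Integrable (fun v : ℝ => Real.exp (-((v+sa)^2)/2)) :=
    integrable_gauss_shift sa
  have hmul_int : Integrable (fun v : ℝ => (v+sa) * Real.exp (-((v+sa)^2)/2)) := by
    have h0 : Integrable (fun v : ℝ => v * Real.exp (-(v^2)/2)) := by
      have := integrable_mul_exp_neg_mul_sq (b := 1/2) (by norm_num)
      convert this using 2 with x
      ring_nf
    simpa using h0.comp_add_right sa
  have hpt3 : ∀ v : ℝ, v * Real.exp (-(v^2)/2 - sa*v)
      = Real.exp (a/2) * ((v+sa) * Real.exp (-((v+sa)^2)/2))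
        - sa * (Real.exp (a/2) * Real.exp (-((v+sa)^2)/2)) := by
    intro v
    have h1 : -(v^2)/2 - sa*v = a/2 + (-((v+sa)^2)/2) := by
      rw [← hsa2]
      ring
    rw [h1, Real.exp_add]
    ring
  have hFTC : ∫ v in Ioi sb, (v+sa) * Real.exp (-((v+sa)^2)/2)
      = Real.exp (-((sb+sa)^2)/2) := by
    have hd : ∀ v ∈ Ici sb, HasDerivAt (fun v => -Real.exp (-((v+sa)^2)/2))
        ((v+sa) * Real.exp (-((v+sa)^2)/2)) v := by
      intro v _
      have h1 : HasDerivAt (fun v : ℝ => -((v+sa)^2)/2) (-(v+sa)) v := by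
        have := (((hasDerivAt_id v).add_const sa).pow 2).neg.div_const 2
        refine this.congr_deriv ?_
        norm_num
        ring
      have h2 := (h1.exp).neg
      refine h2.congr_deriv ?_
      ring
    have htd : Tendsto (fun v : ℝ => -Real.exp (-((v+sa)^2)/2)) atTop (nhds 0) := by
      have hc : Tendsto (fun v : ℝ => -((v+sa)^2)/2) atTop atBot := by
        apply Tendsto.atBot_div_const (by norm_num : (0:ℝ) < 2)
        apply tendsto_neg_atTop_atBot.comp
        exact (tendsto_pow_atTop two_ne_zero).comp (tendsto_atTop_add_const_right _ sa tendsto_id)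
      have := (Real.tendsto_exp_atBot.comp hc).neg
      simpa using this
    have := integral_Ioi_of_hasDerivAt_of_tendsto' hd hmul_int.integrableOn htd
    rw [this]
    simp
  have hTail : ∫ v in Ioi sb, Real.exp (-((v+sa)^2)/2)
      = Real.sqrt (2*π) * Phi (-(sb+sa)) := gauss_shift sa sb
  have hV : ∫ v in Ioi sb, v * Real.exp (-(v^2)/2 - sa*v)
      = Real.exp (a/2) * Real.exp (-((sb+sa)^2)/2)
        - sa * (Real.exp (a/2) * (Real.sqrt (2*π) * Phi (-(sb+sa)))) := by
    rw [setIntegral_congr_fun measurableSet_Ioi (fun v _ => hpt3 v)]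
    rw [integral_sub (hmul_int.integrableOn.const_mul _)
      ((hgauss_shift_int.integrableOn.const_mul _).const_mul _)]
    rw [integral_const_mul, integral_const_mul, integral_const_mul, hFTC, hTail]
  rw [hV] at key
  rw [key]
  rw [hab]
  have e1 : Real.exp (b/2) * (Real.exp (a/2) * Real.exp (-((sb+sa)^2)/2)) = Real.exp (-(sa*sb)) := by
    rw [← Real.exp_add, ← Real.exp_add]
    congr 1
    linear_combination (-1 : ℝ)/2 * hsa2 - 1/2 * hsb2
  have e2 : Real.exp (b/2) * Real.exp (a/2) = Real.exp ((a+b)/2) := by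
    rw [← Real.exp_add]
    congr 1
    ring
  rw [show Real.exp (b/2) * (Real.exp (a/2) * Real.exp (-((sb+sa)^2)/2)
      - sa * (Real.exp (a/2) * (Real.sqrt (2*π) * Phi (-(sb+sa)))))
    = Real.exp (b/2) * (Real.exp (a/2) * Real.exp (-((sb+sa)^2)/2))
      - sa * (Real.exp (b/2) * Real.exp (a/2)) * (Real.sqrt (2*π) * Phi (-(sb+sa))) by ring,
    e1, e2, show -(sb+sa) = -(sa+sb) by ring]
  ring

set_option maxHeartbeats 1000000 in
lemma fubini_M (A B : ℝ) (hA : 0 < A) (hB : 0 < B) :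
    ∫ u in Ioi (0:ℝ), (1/(u*Real.sqrt u*(1+u))) * Real.exp (-(A/u + B*u)/2)
      = Real.sqrt (2*π/A)
        * ∫ s in Ioi (0:ℝ), Real.exp (-s) * Real.exp (-(Real.sqrt A * Real.sqrt (B + 2*s))) := by
  set F : ℝ × ℝ → ℝ := fun z =>
    (1/(z.1*Real.sqrt z.1)) * Real.exp (-(A/z.1 + B*z.1)/2) * Real.exp (-((1+z.1)*z.2))
    with hF_def
  have hmeas : AEStronglyMeasurable F
      ((volume.restrict (Ioi 0)).prod (volume.restrict (Ioi (0:ℝ)))) := by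
    rw [Measure.prod_restrict]
    refine ContinuousOn.aestronglyMeasurable ?_ (measurableSet_Ioi.prod measurableSet_Ioi)
    apply ContinuousOn.mul
    · apply ContinuousOn.mul
      · refine continuousOn_const.div
          ((continuous_fst.mul (Real.continuous_sqrt.comp continuous_fst)).continuousOn) ?_
        intro z hz
        have h1 : (0:ℝ) < z.1 := hz.1
        have : 0 < z.1 * Real.sqrt z.1 := by positivity
        exact this.ne'
      · apply Real.continuous_exp.comp_continuousOn
        apply ContinuousOn.div_const
        apply ContinuousOn.neg
        exact (continuousOn_const.div continuous_fst.continuousOn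
          (fun z hz => ne_of_gt hz.1)).add (continuous_const.mul continuous_fst).continuousOn
    · exact (Real.continuous_exp.comp
        (((continuous_const.add continuous_fst).mul continuous_snd).neg)).continuousOn
  have hbnd : Integrable (fun z : ℝ × ℝ =>
      ((1/(z.1*Real.sqrt z.1)) * Real.exp (-(A/z.1 + B*z.1)/2)) * Real.exp (-z.2))
      ((volume.restrict (Ioi 0)).prod (volume.restrict (Ioi (0:ℝ)))) := by
    have hexp2 : Integrable (fun s : ℝ => Real.exp (-s)) (volume.restrict (Ioi 0)) := by
      exact (by simpa using exp_neg_integrableOn_Ioi (0:ℝ) one_pos : IntegrableOn (fun s : ℝ => Real.exp (-s)) (Ioi 0))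
    exact Integrable.mul_prod (ig A B hA hB).1 hexp2
  have hFint : Integrable F
      ((volume.restrict (Ioi 0)).prod (volume.restrict (Ioi (0:ℝ)))) := by
    refine hbnd.mono hmeas ?_
    rw [Measure.prod_restrict]
    filter_upwards [ae_restrict_mem (measurableSet_Ioi.prod measurableSet_Ioi)] with z hz
    have hu : (0:ℝ) < z.1 := hz.1
    have hs : (0:ℝ) < z.2 := hz.2
    have hsu : 0 < Real.sqrt z.1 := Real.sqrt_pos.2 hu
    rw [hF_def]
    simp only [Real.norm_eq_abs]
    rw [abs_of_nonneg (by positivity), abs_of_nonneg (by positivity)]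
    have hle : Real.exp (-((1+z.1)*z.2)) ≤ Real.exp (-z.2) := by
      apply Real.exp_le_exp.2
      nlinarith
    have h0 : 0 ≤ (1/(z.1*Real.sqrt z.1)) * Real.exp (-(A/z.1 + B*z.1)/2) := by positivity
    calc (1/(z.1*Real.sqrt z.1)) * Real.exp (-(A/z.1 + B*z.1)/2) * Real.exp (-((1+z.1)*z.2))
        ≤ (1/(z.1*Real.sqrt z.1)) * Real.exp (-(A/z.1 + B*z.1)/2) * Real.exp (-z.2) :=
          mul_le_mul_of_nonneg_left hle h0
      _ = _ := rfl
  have hswap := MeasureTheory.integral_integral_swap (f := fun u s => F (u, s)) hFint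
  -- LHS rewriting
  have hlhs : ∫ u in Ioi (0:ℝ), (1/(u*Real.sqrt u*(1+u))) * Real.exp (-(A/u + B*u)/2)
      = ∫ u in Ioi (0:ℝ), ∫ s in Ioi (0:ℝ), F (u, s) := by
    refine setIntegral_congr_fun measurableSet_Ioi ?_
    intro u hu
    have hu0 : (0:ℝ) < u := hu
    have hsu : 0 < Real.sqrt u := Real.sqrt_pos.2 hu0
    have hlap : ∫ s in Ioi (0:ℝ), Real.exp (-((1+u)*s)) = 1/(1+u) :=
      laplace (1+u) (by linarith)
    rw [hF_def]
    simp only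
    rw [integral_const_mul, hlap]
    field_simp
  -- RHS rewriting
  have hrhs : ∫ s in Ioi (0:ℝ), ∫ u in Ioi (0:ℝ), F (u, s)
      = Real.sqrt (2*π/A)
        * ∫ s in Ioi (0:ℝ), Real.exp (-s) * Real.exp (-(Real.sqrt A * Real.sqrt (B + 2*s))) := by
    rw [← integral_const_mul]
    refine setIntegral_congr_fun measurableSet_Ioi ?_
    intro s hs
    have hs0 : (0:ℝ) < s := hs
    show ∫ u in Ioi (0:ℝ), F (u, s)
      = Real.sqrt (2*π/A) * (Real.exp (-s) * Real.exp (-(Real.sqrt A * Real.sqrt (B + 2*s))))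
    have hinner : ∀ u ∈ Ioi (0:ℝ), F (u, s)
        = Real.exp (-s) * ((1/(u*Real.sqrt u)) * Real.exp (-(A/u + (B+2*s)*u)/2)) := by
      intro u hu
      have hu0 : (0:ℝ) < u := hu
      rw [hF_def]
      simp only
      rw [mul_assoc, ← Real.exp_add, show -(A/u + B*u)/2 + -((1+u)*s) = -s + -(A/u + (B+2*s)*u)/2
        by ring, Real.exp_add]
      ring
    rw [setIntegral_congr_fun measurableSet_Ioi hinner, integral_const_mul,
      (ig A (B+2*s) hA (by linarith)).2, Real.sqrt_mul hA.le]
    ring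
  rw [hlhs, hswap, hrhs]

lemma rpow32 (x : ℝ) (hx : 0 < x) : x ^ ((3:ℝ)/2) = x * Real.sqrt x := by
  rw [show (3:ℝ)/2 = 1 + 1/2 by norm_num, Real.rpow_add hx, Real.rpow_one,
    Real.sqrt_eq_rpow]

set_option maxHeartbeats 1000000

/-- Second moment of the stable-1/2 bridge marginal. -/
theorem stable_half_bridge_second_moment (c T t z : ℝ)
    (hc : 0 < c) (ht : 0 < t) (htT : t < T) (hz : 0 < z) :
    (∫ y in Set.Ioo (0 : ℝ) z, y ^ 2 * stableBridgeDen c T t z y)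
      = (t / T) * z ^ 2 *
          (1 - c * (T - t) * Real.exp (c ^ 2 * T ^ 2 / (2 * z)) *
            Real.sqrt (2 * Real.pi / z) * Phi (-(c * T * z ^ (-(1 : ℝ) / 2)))) := by
  have hT : 0 < T := ht.trans htT
  have hTt : 0 < T - t := by linarith
  set A : ℝ := c^2*(T-t)^2/z with hA_def
  set B : ℝ := c^2*t^2/z with hB_def
  have hA : 0 < A := by positivity
  have hB : 0 < B := by positivity
  set sz := Real.sqrt z with hsz_def
  have hsz : 0 < sz := Real.sqrt_pos.2 hz
  have hsz' : sz * sz = z := Real.mul_self_sqrt hz.le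
  -- substitution y = z/(1+u)
  have hderiv : ∀ u ∈ Ioi (0:ℝ),
      HasDerivWithinAt (fun u => z/(1+u)) (-(z/(1+u)^2)) (Ioi 0) u := by
    intro u hu
    have hu0 : (0:ℝ) < u := hu
    have h := (hasDerivAt_const u z).div ((hasDerivAt_id u).const_add 1)
      (by positivity : (1:ℝ)+u ≠ 0)
    refine (h.congr_deriv ?_).hasDerivWithinAt
    simp only [id]
    field_simp
    ring
  have hinj : InjOn (fun u => z/(1+u)) (Ioi 0) := by
    intro x hx y hy h
    have hx0 : (0:ℝ) < x := hx
    have hy0 : (0:ℝ) < y := hy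
    simp only at h
    rw [div_eq_div_iff (by positivity) (by positivity)] at h
    have := mul_left_cancel₀ hz.ne' h
    linarith
  have himg : (fun u => z/(1+u)) '' (Ioi 0) = Ioo 0 z := by
    ext y
    simp only [mem_image, mem_Ioi, mem_Ioo]
    constructor
    · rintro ⟨u, hu, rfl⟩
      constructor
      · positivity
      · rw [div_lt_iff₀ (by positivity)]
        nlinarith
    · rintro ⟨hy0, hyz⟩
      refine ⟨(z-y)/y, div_pos (by linarith) (by linarith), ?_⟩
      field_simp
      ring
  have key := integral_image_eq_integral_abs_deriv_smul (s := Ioi 0) measurableSet_Ioi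
      hderiv hinj (fun y => y^2 * stableBridgeDen c T t z y)
  rw [himg] at key
  set K : ℝ := (1/Real.sqrt (2*π)) * (c*t*(T-t)/T) * (z*sz) * Real.exp (c^2*t*(T-t)/z)
    with hK_def
  have hpt : ∀ u ∈ Ioi (0:ℝ), |(-(z/(1+u)^2))| • ((z/(1+u))^2 * stableBridgeDen c T t z (z/(1+u)))
      = K * ((1/(u*Real.sqrt u*(1+u))) * Real.exp (-(A/u + B*u)/2)) := by
    intro u hu
    have hu0 : (0:ℝ) < u := hu
    have hv : (0:ℝ) < 1+u := by linarith
    have hsu : 0 < Real.sqrt u := Real.sqrt_pos.2 hu0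
    have hsu' : Real.sqrt u * Real.sqrt u = u := Real.mul_self_sqrt hu0.le
    have habs : |(-(z/(1+u)^2))| = z/(1+u)^2 := by
      rw [abs_neg, abs_of_pos (by positivity)]
    rw [habs, smul_eq_mul, stableBridgeDen]
    -- denominator
    have hden : z/(1+u) - (z/(1+u))^2/z = z*u/(1+u)^2 := by
      field_simp
      ring
    have hdpos : 0 < z*u/(1+u)^2 := by positivity
    have hsqrtden : Real.sqrt (z*u/(1+u)^2) = sz*Real.sqrt u/(1+u) := by
      rw [Real.sqrt_div (by positivity) _, Real.sqrt_mul hz.le, Real.sqrt_sq hv.le]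
    have hrpow : (z/(1+u) - (z/(1+u))^2/z) ^ ((3:ℝ)/2)
        = (z*u/(1+u)^2) * (sz*Real.sqrt u/(1+u)) := by
      rw [hden, rpow32 _ hdpos, hsqrtden]
    -- exponent
    have hexp : -(c^2*(T*(z/(1+u)) - t*z)^2) / (2*(z/(1+u))*z*(z - z/(1+u)))
        = c^2*t*(T-t)/z + (-(A/u + B*u)/2) := by
      rw [hA_def, hB_def]
      have e1 : T*(z/(1+u)) - t*z = z*(T - t - t*u)/(1+u) := by
        field_simp
        ring
      have e2 : 2*(z/(1+u))*z*(z - z/(1+u)) = 2*z^3*u/(1+u)^2 := by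
        field_simp
        ring
      rw [e1, e2]
      field_simp
      ring
    rw [hrpow, hexp, Real.exp_add, hK_def]
    rw [← hsz']
    field_simp
  rw [setIntegral_congr_fun measurableSet_Ioi hpt, integral_const_mul,
    fubini_M A B hA hB, outer A B hA hB] at key
  rw [key]
  -- final algebra
  have hsqA : Real.sqrt A = c*(T-t)/sz := by
    rw [hA_def, show c^2*(T-t)^2 = (c*(T-t))^2 by ring, Real.sqrt_div (by positivity) z,
      Real.sqrt_sq (by positivity)]
  have hsqB : Real.sqrt B = c*t/sz := by
    rw [hB_def, show c^2*t^2 = (c*t)^2 by ring, Real.sqrt_div (by positivity) z,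
      Real.sqrt_sq (by positivity)]
  have hsqAB : Real.sqrt (A*B) = c^2*t*(T-t)/z := by
    rw [show A*B = (c^2*t*(T-t)/z)^2 by rw [hA_def, hB_def]; ring]
    exact Real.sqrt_sq (by positivity)
  have hsq2piA : Real.sqrt (2*π/A) = Real.sqrt (2*π)/Real.sqrt A := Real.sqrt_div (by positivity) A
  have hsq2piz : Real.sqrt (2*π/z) = Real.sqrt (2*π)/sz := Real.sqrt_div (by positivity) z
  have hrz : (z : ℝ) ^ (-(1:ℝ)/2) = 1/sz := by
    rw [show (-(1:ℝ)/2) = -(1/2 : ℝ) by norm_num, Real.rpow_neg hz.le,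
      ← Real.sqrt_eq_rpow, ← hsz_def, one_div]
  have hexpT : Real.exp (c^2*t*(T-t)/z) * Real.exp ((A+B)/2) = Real.exp (c^2*T^2/(2*z)) := by
    rw [← Real.exp_add]
    congr 1
    rw [hA_def, hB_def]
    field_simp
    ring
  have hArg : -(Real.sqrt A + Real.sqrt B) = -(c*T*(1/sz)) := by
    rw [hsqA, hsqB]
    field_simp
    ring
  rw [hArg, hsqAB, hsq2piA, hsqA, hsq2piz, hrz, ← hexpT, Real.exp_neg]
  rw [hK_def, ← hsz']
  field_simp
end

section
/- Let f_{tT}(y;z) = (ct(T−t)/(πT))(z² + c²T²)/((y² + c²t²)((z−y)² + c²(T−t)²)) be the Cauchy bridge density. Then ∫_{−∞}^∞ y f_{tT}(y;z) dy = (t/T) z. -/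
open MeasureTheory Real Set

/-- Marginal density at time `t` of a Cauchy bridge from `0` at time `0` to `z` at
time `T`, with scale parameter `c`. -/
noncomputable def cauchyBridgeDen (c T t z y : ℝ) : ℝ :=
  (c * t * (T - t) / (Real.pi * T)) *
    ((z ^ 2 + c ^ 2 * T ^ 2) /
      ((y ^ 2 + c ^ 2 * t ^ 2) * ((z - y) ^ 2 + c ^ 2 * (T - t) ^ 2)))

open Filter Topology

lemma cauchyAux_integrable (a b z : ℝ) (ha : 0 < a) (hb : 0 < b) :
    Integrable (fun y : ℝ => y / ((y ^ 2 + a ^ 2) * ((y - z) ^ 2 + b ^ 2))) := by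
  set m : ℝ := min 1 (b ^ 2) with hm_def
  have hm : 0 < m := lt_min one_pos (by positivity)
  have hcont : Continuous fun y : ℝ => y / ((y ^ 2 + a ^ 2) * ((y - z) ^ 2 + b ^ 2)) := by
    apply continuous_id.div (by fun_prop)
    intro y; positivity
  apply Integrable.mono' (g := fun y => (1 / (2 * a * m)) * (1 + (y - z) ^ 2)⁻¹)
    ((integrable_inv_one_add_sq.comp_sub_right z).const_mul _) hcont.aestronglyMeasurable
  filter_upwards with y
  have h1 : (0:ℝ) < y ^ 2 + a ^ 2 := by positivity
  have h2 : (0:ℝ) < (y - z) ^ 2 + b ^ 2 := by positivity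
  rw [Real.norm_eq_abs, abs_div, abs_of_pos (mul_pos h1 h2)]
  have key1 : |y| / (y ^ 2 + a ^ 2) ≤ 1 / (2 * a) := by
    rw [div_le_div_iff₀ h1 (by positivity)]
    nlinarith [sq_nonneg (|y| - a), sq_abs y]
  have key2 : m * (1 + (y - z) ^ 2) ≤ (y - z) ^ 2 + b ^ 2 := by
    have m1 : m ≤ 1 := min_le_left _ _
    have m2 : m ≤ b ^ 2 := min_le_right _ _
    nlinarith [sq_nonneg (y - z)]
  calc |y| / ((y ^ 2 + a ^ 2) * ((y - z) ^ 2 + b ^ 2))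
      = (|y| / (y ^ 2 + a ^ 2)) * (1 / ((y - z) ^ 2 + b ^ 2)) := by rw [← div_div, div_eq_mul_one_div]
    _ ≤ (1 / (2 * a)) * (1 / (m * (1 + (y - z) ^ 2))) := by
        apply mul_le_mul key1 (one_div_le_one_div_of_le (by positivity) key2)
          (by positivity) (by positivity)
    _ = (1 / (2 * a * m)) * (1 + (y - z) ^ 2)⁻¹ := by
        rw [one_div, mul_inv, one_div, mul_inv, one_div]; ring

lemma cauchyAux_ratio (a b z : ℝ) (hb : 0 < b) (l : Filter ℝ)
    (hinv : Tendsto (fun y : ℝ => y⁻¹) l (𝓝 0)) (hne : ∀ᶠ y in l, y ≠ 0) :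
    Tendsto (fun y : ℝ => (y ^ 2 + a ^ 2) / ((y - z) ^ 2 + b ^ 2)) l (𝓝 1) := by
  have h1 : Tendsto (fun y : ℝ => 1 + (a * y⁻¹) ^ 2) l (𝓝 (1 + (a * 0) ^ 2)) :=
    tendsto_const_nhds.add ((hinv.const_mul a).pow 2)
  have h2 : Tendsto (fun y : ℝ => (1 - z * y⁻¹) ^ 2 + (b * y⁻¹) ^ 2) l
      (𝓝 ((1 - z * 0) ^ 2 + (b * 0) ^ 2)) :=
    ((tendsto_const_nhds.sub (hinv.const_mul z)).pow 2).add ((hinv.const_mul b).pow 2)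
  have h3 := h1.div h2 (by norm_num)
  have h4 : ((1 + (a * 0) ^ 2) / ((1 - z * 0) ^ 2 + (b * 0) ^ 2) : ℝ) = 1 := by norm_num
  rw [h4] at h3
  apply h3.congr'
  filter_upwards [hne] with y hy
  have hden : ((y - z) ^ 2 + b ^ 2 : ℝ) ≠ 0 := by positivity
  rw [Pi.div_apply]
  field_simp

lemma cauchyAux_integral (a b z : ℝ) (ha : 0 < a) (hb : 0 < b) (hz : z ≠ 0) :
    (∫ y : ℝ, y / ((y ^ 2 + a ^ 2) * ((y - z) ^ 2 + b ^ 2)))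
      = π * z / (b * (z ^ 2 + (a + b) ^ 2)) := by
  have hz2 : (0:ℝ) < z ^ 2 := by positivity
  have hD1 : (0:ℝ) < z ^ 2 + (a + b) ^ 2 := by positivity
  have hD2 : (0:ℝ) < z ^ 2 + (a - b) ^ 2 := by positivity
  have hD : (0:ℝ) < (z ^ 2 + (a + b) ^ 2) * (z ^ 2 + (a - b) ^ 2) := mul_pos hD1 hD2
  set D : ℝ := (z ^ 2 + (a + b) ^ 2) * (z ^ 2 + (a - b) ^ 2) with hD_def
  set P : ℝ := (z ^ 2 + b ^ 2 - a ^ 2) / D with hP_def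
  set Q : ℝ := -(2 * z * a ^ 2) / D with hQ_def
  set S : ℝ := ((z ^ 2 + b ^ 2 - a ^ 2) * z + 2 * z * a ^ 2) / D with hS_def
  set F : ℝ → ℝ := fun y =>
    (P / 2 * Real.log (y ^ 2 + a ^ 2) - P / 2 * Real.log ((y - z) ^ 2 + b ^ 2))
      + (Q / a * Real.arctan (y / a) + S / b * Real.arctan ((y - z) / b)) with hF_def
  have hderiv : ∀ y : ℝ, HasDerivAt F (y / ((y ^ 2 + a ^ 2) * ((y - z) ^ 2 + b ^ 2))) y := by
    intro y
    have h1 : (0:ℝ) < y ^ 2 + a ^ 2 := by positivity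
    have h2 : (0:ℝ) < (y - z) ^ 2 + b ^ 2 := by positivity
    have d1 : HasDerivAt (fun y : ℝ => y ^ 2 + a ^ 2) (2 * y) y := by
      simpa using (hasDerivAt_pow 2 y).add_const (a ^ 2)
    have d2 : HasDerivAt (fun y : ℝ => (y - z) ^ 2 + b ^ 2) (2 * (y - z)) y := by
      have := (((hasDerivAt_id y).sub_const z).pow 2).add_const (b ^ 2)
      simpa [Function.comp, inv_neg] using this
    have dl1 := d1.log h1.ne'
    have dl2 := d2.log h2.ne'
    have di1 : HasDerivAt (fun y : ℝ => y / a) (1 / a) y := by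
      simpa using (hasDerivAt_id y).div_const a
    have di2 : HasDerivAt (fun y : ℝ => (y - z) / b) (1 / b) y := by
      simpa using ((hasDerivAt_id y).sub_const z).div_const b
    have da1 := di1.arctan
    have da2 := di2.arctan
    have hcomb := ((dl1.const_mul (P / 2)).sub (dl2.const_mul (P / 2))).add
      ((da1.const_mul (Q / a)).add (da2.const_mul (S / b)))
    refine hcomb.congr_deriv ?_
    rw [hP_def, hQ_def, hS_def, hD_def]
    have h3 : (1 : ℝ) + (y / a) ^ 2 ≠ 0 := by positivity
    have h4 : (1 : ℝ) + ((y - z) / b) ^ 2 ≠ 0 := by positivity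
    field_simp
    ring
  have hint := cauchyAux_integrable a b z ha hb
  have hlog_top : Tendsto (fun y : ℝ =>
      P / 2 * Real.log (y ^ 2 + a ^ 2) - P / 2 * Real.log ((y - z) ^ 2 + b ^ 2))
      atTop (𝓝 0) := by
    have hr := cauchyAux_ratio a b z hb atTop tendsto_inv_atTop_zero
      (eventually_gt_atTop 0 |>.mono fun y hy => hy.ne')
    have hl : Tendsto (fun y : ℝ =>
        P / 2 * Real.log ((y ^ 2 + a ^ 2) / ((y - z) ^ 2 + b ^ 2))) atTop (𝓝 (P / 2 * 0)) := by
      have := (Real.continuousAt_log one_ne_zero).tendsto.comp hr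
      rw [Real.log_one] at this
      exact this.const_mul (P / 2)
    rw [mul_zero] at hl
    apply hl.congr
    intro y
    have h1 : (0:ℝ) < y ^ 2 + a ^ 2 := by positivity
    have h2 : (0:ℝ) < (y - z) ^ 2 + b ^ 2 := by positivity
    rw [Real.log_div h1.ne' h2.ne', mul_sub]
  have hlog_bot : Tendsto (fun y : ℝ =>
      P / 2 * Real.log (y ^ 2 + a ^ 2) - P / 2 * Real.log ((y - z) ^ 2 + b ^ 2))
      atBot (𝓝 0) := by
    have hinvbot : Tendsto (fun y : ℝ => y⁻¹) atBot (𝓝 0) := by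
      have := tendsto_inv_atTop_zero (𝕜 := ℝ)
      have hcomp := this.comp (tendsto_neg_atBot_atTop : Tendsto (fun y : ℝ => -y) atBot atTop)
      have : Tendsto (fun y : ℝ => -(-y)⁻¹) atBot (𝓝 (-0)) := (hcomp.neg)
      simpa [Function.comp, inv_neg] using this
    have hr := cauchyAux_ratio a b z hb atBot hinvbot
      (eventually_lt_atBot 0 |>.mono fun y hy => hy.ne)
    have hl : Tendsto (fun y : ℝ =>
        P / 2 * Real.log ((y ^ 2 + a ^ 2) / ((y - z) ^ 2 + b ^ 2))) atBot (𝓝 (P / 2 * 0)) := by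
      have := (Real.continuousAt_log one_ne_zero).tendsto.comp hr
      rw [Real.log_one] at this
      exact this.const_mul (P / 2)
    rw [mul_zero] at hl
    apply hl.congr
    intro y
    have h1 : (0:ℝ) < y ^ 2 + a ^ 2 := by positivity
    have h2 : (0:ℝ) < (y - z) ^ 2 + b ^ 2 := by positivity
    rw [Real.log_div h1.ne' h2.ne', mul_sub]
  have harct_top1 : Tendsto (fun y : ℝ => Real.arctan (y / a)) atTop (𝓝 (π / 2)) :=
    tendsto_nhds_of_tendsto_nhdsWithin
      (Real.tendsto_arctan_atTop.comp (tendsto_id.atTop_div_const ha))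
  have harct_top2 : Tendsto (fun y : ℝ => Real.arctan ((y - z) / b)) atTop (𝓝 (π / 2)) :=
    tendsto_nhds_of_tendsto_nhdsWithin
      (Real.tendsto_arctan_atTop.comp ((tendsto_atTop_add_const_right atTop (-z)
        tendsto_id).atTop_div_const hb))
  have harct_bot1 : Tendsto (fun y : ℝ => Real.arctan (y / a)) atBot (𝓝 (-(π / 2))) :=
    tendsto_nhds_of_tendsto_nhdsWithin
      (Real.tendsto_arctan_atBot.comp (tendsto_id.atBot_div_const ha))
  have harct_bot2 : Tendsto (fun y : ℝ => Real.arctan ((y - z) / b)) atBot (𝓝 (-(π / 2))) :=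
    tendsto_nhds_of_tendsto_nhdsWithin
      (Real.tendsto_arctan_atBot.comp ((tendsto_atBot_add_const_right atBot (-z)
        tendsto_id).atBot_div_const hb))
  have htop : Tendsto F atTop (𝓝 (0 + (Q / a * (π / 2) + S / b * (π / 2)))) :=
    hlog_top.add ((harct_top1.const_mul (Q / a)).add (harct_top2.const_mul (S / b)))
  have hbot : Tendsto F atBot (𝓝 (0 + (Q / a * (-(π / 2)) + S / b * (-(π / 2))))) :=
    hlog_bot.add ((harct_bot1.const_mul (Q / a)).add (harct_bot2.const_mul (S / b)))
  rw [MeasureTheory.integral_of_hasDerivAt_of_tendsto hderiv hint hbot htop]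
  simp only [hQ_def, hS_def, hD_def]
  have hpi : Real.pi ≠ 0 := Real.pi_ne_zero
  field_simp
  ring

/-- First moment of the Cauchy bridge marginal. -/
theorem cauchy_bridge_first_moment (c T t z : ℝ)
    (hc : 0 < c) (ht : 0 < t) (htT : t < T) :
    (∫ y : ℝ, y * cauchyBridgeDen c T t z y) = (t / T) * z := by
  have hT : (0:ℝ) < T := ht.trans htT
  rcases eq_or_ne z 0 with hz | hz
  · subst hz
    have A : MeasurableEmbedding (fun x : ℝ => -x) :=
      (Homeomorph.neg ℝ).measurableEmbedding
    have h1 := MeasurableEmbedding.integral_map (μ := volume) A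
      (g := fun w : ℝ => w * cauchyBridgeDen c T t 0 w)
    rw [Measure.map_neg_eq_self] at h1
    have h2 : (∫ y : ℝ, (fun w : ℝ => w * cauchyBridgeDen c T t 0 w) (-y))
        = -∫ y : ℝ, y * cauchyBridgeDen c T t 0 y := by
      rw [← MeasureTheory.integral_neg]
      congr 1
      funext y
      simp only [cauchyBridgeDen]
      ring
    have h3 := h1.trans h2
    have : (∫ y : ℝ, y * cauchyBridgeDen c T t 0 y) = 0 := by linarith
    rw [this]; ring
  · have ha : 0 < c * t := mul_pos hc ht
    have hb : 0 < c * (T - t) := mul_pos hc (by linarith)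
    have hkey : ∀ y : ℝ, y * cauchyBridgeDen c T t z y
        = ((c * t * (T - t) / (Real.pi * T)) * (z ^ 2 + c ^ 2 * T ^ 2)) *
          (y / ((y ^ 2 + (c * t) ^ 2) * ((y - z) ^ 2 + (c * (T - t)) ^ 2))) := by
      intro y; simp only [cauchyBridgeDen]; ring
    simp_rw [hkey]
    rw [MeasureTheory.integral_const_mul, cauchyAux_integral _ _ _ ha hb hz]
    have h5 : c * t + c * (T - t) = c * T := by ring
    rw [h5]
    have h6 : (0:ℝ) < z ^ 2 + (c * T) ^ 2 := by positivity
    have h7 : (0:ℝ) < z ^ 2 + c ^ 2 * T ^ 2 := by positivity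
    have hpi := Real.pi_ne_zero
    have hTt : T - t ≠ 0 := (sub_pos.mpr htT).ne'
    field_simp
end

section
/- Let f_{tT}(y;z) = (ct(T−t)/(πT))(z² + c²T²)/((y² + c²t²)((z−y)² + c²(T−t)²)) be the Cauchy bridge density. Then the second moment exists and ∫_{−∞}^∞ y² f_{tT}(y;z) dy = (t/T)(z² + c²T(T−t)). -/
open MeasureTheory Real Set Filter Topology

lemma aux_tendsto_inv_atBot_zero : Tendsto (fun y : ℝ => y⁻¹) atBot (𝓝 0) := by
  have h1 : Tendsto (fun y : ℝ => -y) atBot atTop := tendsto_neg_atBot_atTop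
  have h2 : Tendsto (fun y : ℝ => (-y)⁻¹) atBot (𝓝 0) := tendsto_inv_atTop_zero.comp h1
  have h3 := h2.neg
  rw [neg_zero] at h3
  refine h3.congr fun y => ?_
  rw [← inv_neg, neg_neg]

lemma aux_integrable_kernel (b z : ℝ) (hb : 0 < b) :
    Integrable fun y : ℝ => ((z - y) ^ 2 + b ^ 2)⁻¹ := by
  have h1 : Integrable fun u : ℝ => (1 + u ^ 2)⁻¹ := integrable_inv_one_add_sq
  have h2 : Integrable fun u : ℝ => (1 + (z / b - u) ^ 2)⁻¹ := h1.comp_sub_left (z / b)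
  have h3 : Integrable fun y : ℝ => (1 + (z / b - y / b) ^ 2)⁻¹ := h2.comp_div hb.ne'
  have h4 := h3.const_mul ((b ^ 2)⁻¹)
  refine h4.congr (Filter.Eventually.of_forall fun y => ?_)
  have hzy : (z - y) ^ 2 + b ^ 2 ≠ 0 := by positivity
  field_simp
  ring

lemma aux_integrable_main (a b z : ℝ) (ha : 0 < a) (hb : 0 < b) :
    Integrable fun y : ℝ => y ^ 2 / ((y ^ 2 + a ^ 2) * ((z - y) ^ 2 + b ^ 2)) := by
  refine (aux_integrable_kernel b z hb).mono' ?_ ?_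
  · apply Continuous.aestronglyMeasurable
    apply Continuous.div (by fun_prop) (by fun_prop)
    intro y
    positivity
  · refine Filter.Eventually.of_forall fun y => ?_
    have h1 : (0:ℝ) < y ^ 2 + a ^ 2 := by positivity
    have h2 : (0:ℝ) < (z - y) ^ 2 + b ^ 2 := by positivity
    rw [Real.norm_eq_abs, abs_of_nonneg (by positivity)]
    rw [inv_eq_one_div, div_le_div_iff₀ (by positivity) (by positivity)]
    nlinarith [mul_nonneg (sq_nonneg a) h2.le]

lemma aux_ratio_tendsto_atTop (a b z : ℝ) (hb : 0 < b) :
    Tendsto (fun y : ℝ => (y ^ 2 + a ^ 2) / ((z - y) ^ 2 + b ^ 2)) atTop (𝓝 1) := by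
  have hc : Tendsto (fun u : ℝ => (1 + a ^ 2 * u ^ 2) / ((z * u - 1) ^ 2 + b ^ 2 * u ^ 2))
      (𝓝 0) (𝓝 1) := by
    have h1 : ContinuousAt (fun u : ℝ => (1 + a ^ 2 * u ^ 2) / ((z * u - 1) ^ 2 + b ^ 2 * u ^ 2)) 0 :=
      ContinuousAt.div (by fun_prop) (by fun_prop) (by norm_num)
    have h2 := h1.tendsto
    norm_num at h2
    exact h2
  have h := hc.comp tendsto_inv_atTop_zero
  refine h.congr' ?_
  filter_upwards [eventually_gt_atTop (0:ℝ)] with y hy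
  have hy' : y ≠ 0 := hy.ne'
  have hd1 : ((z * y⁻¹ - 1) ^ 2 + b ^ 2 * (y⁻¹) ^ 2) ≠ 0 := by
    have : (z - y) ^ 2 + b ^ 2 = y ^ 2 * ((z * y⁻¹ - 1) ^ 2 + b ^ 2 * (y⁻¹) ^ 2) := by
      field_simp
    have h2 : (0:ℝ) < (z - y) ^ 2 + b ^ 2 := by positivity
    intro hz; rw [this, hz, mul_zero] at h2; exact lt_irrefl 0 h2
  have hd2 : ((z - y) ^ 2 + b ^ 2) ≠ 0 := by positivity
  simp only [Function.comp]
  rw [div_eq_div_iff hd1 hd2]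
  field_simp

lemma aux_ratio_tendsto_atBot (a b z : ℝ) (hb : 0 < b) :
    Tendsto (fun y : ℝ => (y ^ 2 + a ^ 2) / ((z - y) ^ 2 + b ^ 2)) atBot (𝓝 1) := by
  have h := (aux_ratio_tendsto_atTop a b (-z) hb).comp tendsto_neg_atBot_atTop
  refine h.congr fun y => ?_
  show ((-y) ^ 2 + a ^ 2) / ((-z - -y) ^ 2 + b ^ 2) = (y ^ 2 + a ^ 2) / ((z - y) ^ 2 + b ^ 2)
  ring_nf

lemma aux_log_tendsto_atTop (a b z : ℝ) (ha : 0 < a) (hb : 0 < b) :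
    Tendsto (fun y : ℝ => Real.log (y ^ 2 + a ^ 2) - Real.log ((z - y) ^ 2 + b ^ 2))
      atTop (𝓝 0) := by
  have h := (Real.continuousAt_log one_ne_zero).tendsto.comp (aux_ratio_tendsto_atTop a b z hb)
  rw [Real.log_one] at h
  refine h.congr fun y => ?_
  simp only [Function.comp]
  rw [Real.log_div (by positivity) (by positivity)]

lemma aux_log_tendsto_atBot (a b z : ℝ) (ha : 0 < a) (hb : 0 < b) :
    Tendsto (fun y : ℝ => Real.log (y ^ 2 + a ^ 2) - Real.log ((z - y) ^ 2 + b ^ 2))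
      atBot (𝓝 0) := by
  have h := (Real.continuousAt_log one_ne_zero).tendsto.comp (aux_ratio_tendsto_atBot a b z hb)
  rw [Real.log_one] at h
  refine h.congr fun y => ?_
  simp only [Function.comp]
  rw [Real.log_div (by positivity) (by positivity)]

lemma aux_arctan_tendsto_atTop (a z : ℝ) (ha : 0 < a) :
    Tendsto (fun y : ℝ => Real.arctan ((y - z) / a)) atTop (𝓝 (π / 2)) := by
  have hin : Tendsto (fun y : ℝ => (y - z) / a) atTop atTop :=
    (tendsto_atTop_add_const_right atTop (-z) tendsto_id).atTop_div_const ha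
  exact (tendsto_nhds_of_tendsto_nhdsWithin Real.tendsto_arctan_atTop).comp hin

lemma aux_arctan_tendsto_atBot (a z : ℝ) (ha : 0 < a) :
    Tendsto (fun y : ℝ => Real.arctan ((y - z) / a)) atBot (𝓝 (-(π / 2))) := by
  have hin : Tendsto (fun y : ℝ => (y - z) / a) atBot atBot :=
    (tendsto_atBot_add_const_right atBot (-z) tendsto_id).atBot_div_const ha
  exact (tendsto_nhds_of_tendsto_nhdsWithin Real.tendsto_arctan_atBot).comp hin

lemma aux_combine (A B B' u v D1 D2 : ℝ) (h1 : D1 ≠ 0) (h2 : D2 ≠ 0) :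
    ((A * u + B) * D2 + (A * v + B') * D1) / (D1 * D2)
      = A / 2 * (2 * u / D1 - 2 * v ^ 1 * -1 / D2) + B / D1 + B' / D2 := by
  field_simp
  ring

set_option maxHeartbeats 1000000 in
lemma cauchy_conv_sq (a b z : ℝ) (ha : 0 < a) (hb : 0 < b) :
    ∫ y : ℝ, y ^ 2 / ((y ^ 2 + a ^ 2) * ((z - y) ^ 2 + b ^ 2))
      = π / b - π * a * (a + b) / (b * (z ^ 2 + (a + b) ^ 2)) := by
  have hint := aux_integrable_main a b z ha hb
  by_cases hdeg : z = 0 ∧ b = a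
  · obtain ⟨rfl, rfl⟩ := hdeg
    clear ha
    -- degenerate case: integrand is y² / ((y²+b²)²)
    set F : ℝ → ℝ := fun y => (1 / (2 * b)) * Real.arctan (y / b) - y / (2 * (y ^ 2 + b ^ 2))
      with hF
    have hder : ∀ y : ℝ, HasDerivAt F
        (y ^ 2 / ((y ^ 2 + b ^ 2) * (((0:ℝ) - y) ^ 2 + b ^ 2))) y := by
      intro y
      have hY : (0:ℝ) < y ^ 2 + b ^ 2 := by positivity
      have d1 : HasDerivAt (fun y : ℝ => Real.arctan (y / b)) (1 / (1 + (y / b) ^ 2) * (1 / b)) y := by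
        have hi : HasDerivAt (fun y : ℝ => y / b) (1 / b) y := by
          simpa using (hasDerivAt_id y).div_const b
        exact (Real.hasDerivAt_arctan (y / b)).comp y hi
      have d2 : HasDerivAt (fun y : ℝ => y / (2 * (y ^ 2 + b ^ 2)))
          ((1 * (2 * (y ^ 2 + b ^ 2)) - y * (2 * (2 * y))) / (2 * (y ^ 2 + b ^ 2)) ^ 2) y := by
        have dden : HasDerivAt (fun y : ℝ => 2 * (y ^ 2 + b ^ 2)) (2 * (2 * y)) y := by
          have : HasDerivAt (fun y : ℝ => y ^ 2 + b ^ 2) (2 * y) y := by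
            simpa using (hasDerivAt_pow 2 y).add_const (b ^ 2)
          exact this.const_mul 2
        exact (hasDerivAt_id y).div dden (by positivity)
      have dF := (d1.const_mul (1 / (2 * b))).sub d2
      refine dF.congr_deriv ?_
      symm
      have h1 : (1:ℝ) + (y / b) ^ 2 ≠ 0 := by positivity
      field_simp
      ring
    have htail_top : Tendsto (fun y : ℝ => y / (2 * (y ^ 2 + b ^ 2))) atTop (𝓝 0) := by
      have hc : Tendsto (fun u : ℝ => u / (2 * (1 + b ^ 2 * u ^ 2))) (𝓝 0) (𝓝 0) := by
        have h1 : ContinuousAt (fun u : ℝ => u / (2 * (1 + b ^ 2 * u ^ 2))) 0 :=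
          ContinuousAt.div (by fun_prop) (by fun_prop) (by norm_num)
        have h2 := h1.tendsto
        norm_num at h2
        exact h2
      have h := hc.comp tendsto_inv_atTop_zero
      refine h.congr' ?_
      filter_upwards [eventually_gt_atTop (0:ℝ)] with y hy
      have hy' : y ≠ 0 := hy.ne'
      simp only [Function.comp]
      rw [div_eq_div_iff (by positivity) (by positivity)]
      field_simp
    have htail_bot : Tendsto (fun y : ℝ => y / (2 * (y ^ 2 + b ^ 2))) atBot (𝓝 0) := by
      have hc : Tendsto (fun u : ℝ => u / (2 * (1 + b ^ 2 * u ^ 2))) (𝓝 0) (𝓝 0) := by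
        have h1 : ContinuousAt (fun u : ℝ => u / (2 * (1 + b ^ 2 * u ^ 2))) 0 :=
          ContinuousAt.div (by fun_prop) (by fun_prop) (by norm_num)
        have h2 := h1.tendsto
        norm_num at h2
        exact h2
      have h := hc.comp aux_tendsto_inv_atBot_zero
      refine h.congr' ?_
      filter_upwards [eventually_lt_atBot (0:ℝ)] with y hy
      have hy' : y ≠ 0 := hy.ne
      simp only [Function.comp]
      rw [div_eq_div_iff (by positivity) (by positivity)]
      field_simp
    have htop : Tendsto F atTop (𝓝 ((1 / (2 * b)) * (π / 2) - 0)) := by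
      refine Tendsto.sub ?_ htail_top
      exact ((aux_arctan_tendsto_atTop b 0 hb).congr (fun y => by ring_nf)).const_mul _
    have hbot : Tendsto F atBot (𝓝 ((1 / (2 * b)) * (-(π / 2)) - 0)) := by
      refine Tendsto.sub ?_ htail_bot
      exact ((aux_arctan_tendsto_atBot b 0 hb).congr (fun y => by ring_nf)).const_mul _
    have hres := integral_of_hasDerivAt_of_tendsto hder hint hbot htop
    rw [hres]
    have hS : ((0:ℝ) ^ 2 + (b + b) ^ 2) ≠ 0 := by positivity
    field_simp
    ring
  · -- nondegenerate case
    set Δ : ℝ := (z ^ 2 + b ^ 2 - a ^ 2) ^ 2 + 4 * z ^ 2 * a ^ 2 with hΔdef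
    have hΔ : Δ ≠ 0 := by
      intro h
      have hza : z ^ 2 * a ^ 2 = 0 := by nlinarith [sq_nonneg (z ^ 2 + b ^ 2 - a ^ 2)]
      have hz : z = 0 := by
        rcases mul_eq_zero.1 hza with h1 | h1
        · exact pow_eq_zero_iff (n := 2) (by norm_num) |>.1 h1
        · exact absurd (pow_eq_zero_iff (n := 2) (by norm_num) |>.1 h1) ha.ne'
      subst hz
      have hb2 : b ^ 2 = a ^ 2 := by nlinarith
      have hba : (b - a) * (b + a) = 0 := by linear_combination hb2
      rcases mul_eq_zero.1 hba with h1 | h1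
      · exact hdeg ⟨rfl, by linarith⟩
      · linarith
    set A : ℝ := -2 * z * a ^ 2 / Δ with hA
    set B : ℝ := -(a ^ 2) * (z ^ 2 + b ^ 2 - a ^ 2) / Δ with hB
    set B' : ℝ := 1 + A * z - B with hB'
    have hid : ∀ y : ℝ,
        (A * y + B) * ((z - y) ^ 2 + b ^ 2) + (A * (z - y) + B') * (y ^ 2 + a ^ 2) = y ^ 2 := by
      intro y
      rw [hB', hA, hB]
      field_simp
      ring
    set F : ℝ → ℝ := fun y =>
      A / 2 * (Real.log (y ^ 2 + a ^ 2) - Real.log ((z - y) ^ 2 + b ^ 2))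
        + (B / a) * Real.arctan (y / a) + (B' / b) * Real.arctan ((y - z) / b) with hF
    have hder : ∀ y : ℝ, HasDerivAt F
        (y ^ 2 / ((y ^ 2 + a ^ 2) * ((z - y) ^ 2 + b ^ 2))) y := by
      intro y
      have hY : (0:ℝ) < y ^ 2 + a ^ 2 := by positivity
      have hZ : (0:ℝ) < (z - y) ^ 2 + b ^ 2 := by positivity
      have d1 : HasDerivAt (fun y : ℝ => y ^ 2 + a ^ 2) (2 * y) y := by
        simpa using (hasDerivAt_pow 2 y).add_const (a ^ 2)
      have d2 : HasDerivAt (fun y : ℝ => (z - y) ^ 2 + b ^ 2) (2 * (z - y) ^ 1 * -1) y := by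
        exact (((hasDerivAt_id y).const_sub z).pow 2).add_const (b ^ 2)
      have d3 := d1.log hY.ne'
      have d4 := d2.log hZ.ne'
      have d5 : HasDerivAt (fun y : ℝ => Real.arctan (y / a)) (1 / (1 + (y / a) ^ 2) * (1 / a)) y := by
        have hi : HasDerivAt (fun y : ℝ => y / a) (1 / a) y := by
          simpa using (hasDerivAt_id y).div_const a
        exact (Real.hasDerivAt_arctan (y / a)).comp y hi
      have d6 : HasDerivAt (fun y : ℝ => Real.arctan ((y - z) / b))
          (1 / (1 + ((y - z) / b) ^ 2) * (1 / b)) y := by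
        have hi : HasDerivAt (fun y : ℝ => (y - z) / b) (1 / b) y := by
          simpa using ((hasDerivAt_id y).sub_const z).div_const b
        exact (Real.hasDerivAt_arctan ((y - z) / b)).comp y hi
      have d5' : HasDerivAt (fun y : ℝ => Real.arctan (y / a)) (a / (y ^ 2 + a ^ 2)) y := by
        convert d5 using 1
        have h1 : (1:ℝ) + (y / a) ^ 2 ≠ 0 := by positivity
        field_simp
        ring
      have d6' : HasDerivAt (fun y : ℝ => Real.arctan ((y - z) / b))
          (b / ((z - y) ^ 2 + b ^ 2)) y := by
        convert d6 using 1
        have h2 : (1:ℝ) + ((y - z) / b) ^ 2 ≠ 0 := by positivity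
        field_simp
        ring
      have dF := (((d3.sub d4).const_mul (A / 2)).add (d5'.const_mul (B / a))).add
        (d6'.const_mul (B' / b))
      refine dF.congr_deriv ?_
      symm
      have e1 : B / a * (a / (y ^ 2 + a ^ 2)) = B / (y ^ 2 + a ^ 2) := by
        rw [div_mul_div_comm, mul_comm B a, mul_div_mul_left _ _ ha.ne']
      have e2 : B' / b * (b / ((z - y) ^ 2 + b ^ 2)) = B' / ((z - y) ^ 2 + b ^ 2) := by
        rw [div_mul_div_comm, mul_comm B' b, mul_div_mul_left _ _ hb.ne']
      have hfrac : y ^ 2 / ((y ^ 2 + a ^ 2) * ((z - y) ^ 2 + b ^ 2))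
          = A / 2 * (2 * y / (y ^ 2 + a ^ 2) - 2 * (z - y) ^ 1 * -1 / ((z - y) ^ 2 + b ^ 2))
            + B / (y ^ 2 + a ^ 2) + B' / ((z - y) ^ 2 + b ^ 2) := by
        rw [← aux_combine A B B' y (z - y) _ _ hY.ne' hZ.ne', hid y]
      rw [hfrac, ← e1, ← e2]
    have htop : Tendsto F atTop
        (𝓝 (A / 2 * 0 + (B / a) * (π / 2) + (B' / b) * (π / 2))) := by
      refine Tendsto.add (Tendsto.add ?_ ?_) ?_
      · exact (aux_log_tendsto_atTop a b z ha hb).const_mul _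
      · exact ((aux_arctan_tendsto_atTop a 0 ha).congr (fun y => by ring_nf)).const_mul _
      · exact (aux_arctan_tendsto_atTop b z hb).const_mul _
    have hbot : Tendsto F atBot
        (𝓝 (A / 2 * 0 + (B / a) * (-(π / 2)) + (B' / b) * (-(π / 2)))) := by
      refine Tendsto.add (Tendsto.add ?_ ?_) ?_
      · exact (aux_log_tendsto_atBot a b z ha hb).const_mul _
      · exact ((aux_arctan_tendsto_atBot a 0 ha).congr (fun y => by ring_nf)).const_mul _
      · exact (aux_arctan_tendsto_atBot b z hb).const_mul _
    have hres := integral_of_hasDerivAt_of_tendsto hder hint hbot htop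
    rw [hres, hB', hA, hB]
    have hS : ((z : ℝ) ^ 2 + (a + b) ^ 2) ≠ 0 := by positivity
    field_simp
    ring

/-- Second moment of the Cauchy bridge marginal. -/
theorem cauchy_bridge_second_moment (c T t z : ℝ)
    (hc : 0 < c) (ht : 0 < t) (htT : t < T) :
    (∫ y : ℝ, y ^ 2 * cauchyBridgeDen c T t z y)
      = (t / T) * (z ^ 2 + c ^ 2 * T * (T - t)) := by
  have hT : 0 < T := ht.trans htT
  have hTt : 0 < T - t := sub_pos.2 htT
  have ha : 0 < c * t := mul_pos hc ht
  have hb : 0 < c * (T - t) := mul_pos hc hTt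
  set K : ℝ := c * t * (T - t) * (z ^ 2 + c ^ 2 * T ^ 2) / (π * T) with hK
  have heq : ∀ y : ℝ, y ^ 2 * cauchyBridgeDen c T t z y
      = K * (y ^ 2 / ((y ^ 2 + (c * t) ^ 2) * ((z - y) ^ 2 + (c * (T - t)) ^ 2))) := by
    intro y
    rw [hK]
    unfold cauchyBridgeDen
    ring
  rw [integral_congr_ae (Filter.Eventually.of_forall heq), integral_const_mul,
    cauchy_conv_sq (c * t) (c * (T - t)) z ha hb]
  rw [hK]
  have hS : ((z : ℝ) ^ 2 + (c * t + c * (T - t)) ^ 2) ≠ 0 := by positivity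
  have hπ : (π : ℝ) ≠ 0 := Real.pi_ne_zero
  field_simp
  ring
end

section
/- For the Cauchy bridge density f_{tT}(y;z) as above, ∫_{−∞}^∞ |y|^p f_{tT}(y;z) dy < ∞ for all p ∈ (0,3), while ∫_{−∞}^∞ |y|³ f_{tT}(y;z) dy = ∞. -/
open MeasureTheory Real Set

private lemma cb_aux_bound {C A B z p y : ℝ} (hC : 0 < C) (hA : 0 < A) (hB : 0 < B)
    (hy : 2 * |z| + 1 ≤ |y|) :
    |y| ^ p * (C / ((y ^ 2 + A) * ((z - y) ^ 2 + B))) ≤ (4 * C) * |y| ^ (p - 4) := by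
  have hy1 : (1 : ℝ) ≤ |y| := by have := abs_nonneg z; linarith
  have hy0 : (0 : ℝ) < |y| := by linarith
  have hz : |y| / 2 ≤ |z - y| := by
    have h1 : |y| - |z| ≤ |y - z| := abs_sub_abs_le_abs_sub y z
    have h2 : |y - z| = |z - y| := abs_sub_comm y z
    have h3 : |z| ≤ (|y| - 1) / 2 := by linarith
    linarith
  have h1 : y ^ 2 / 4 ≤ (z - y) ^ 2 := by
    have := mul_self_le_mul_self (by positivity : (0:ℝ) ≤ |y| / 2) hz
    calc y ^ 2 / 4 = (|y| / 2) * (|y| / 2) := by rw [div_mul_div_comm, ← sq_abs]; ring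
      _ ≤ |z - y| * |z - y| := this
      _ = (z - y) ^ 2 := by rw [← sq_abs]; ring
  have hD : 0 < (y ^ 2 + A) * ((z - y) ^ 2 + B) := by positivity
  have hy4 : (0 : ℝ) < y ^ 4 := by
    have : y ≠ 0 := by intro h; rw [h, abs_zero] at hy0; linarith
    positivity
  have hD4 : y ^ 4 ≤ 4 * ((y ^ 2 + A) * ((z - y) ^ 2 + B)) := by
    nlinarith [sq_nonneg y, sq_nonneg (z - y), hA.le, hB.le,
      mul_le_mul_of_nonneg_left h1 (sq_nonneg y)]
  have hfrac : C / ((y ^ 2 + A) * ((z - y) ^ 2 + B)) ≤ (4 * C) / y ^ 4 := by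
    rw [div_le_div_iff₀ hD hy4]
    nlinarith [mul_le_mul_of_nonneg_left hD4 hC.le]
  have hrpow : |y| ^ (p - 4) = |y| ^ p / y ^ 4 := by
    rw [Real.rpow_sub hy0, show (4:ℝ) = ((4:ℕ):ℝ) by norm_num, Real.rpow_natCast]
    congr 1
    rw [← abs_pow, abs_of_nonneg hy4.le]
  calc |y| ^ p * (C / ((y ^ 2 + A) * ((z - y) ^ 2 + B)))
      ≤ |y| ^ p * ((4 * C) / y ^ 4) := by
        exact mul_le_mul_of_nonneg_left hfrac (Real.rpow_nonneg (abs_nonneg y) p)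
    _ = (4 * C) * (|y| ^ p / y ^ 4) := by ring
    _ = (4 * C) * |y| ^ (p - 4) := by rw [hrpow]

private lemma cb_aux_lower {C A B z y : ℝ} (hC : 0 < C) (hA : 0 < A) (hB : 0 < B)
    (hy : 2 * |z| + A + B + 1 ≤ y) :
    C / ((1 + A) * (4 + B)) * y⁻¹ ≤
      |y| ^ (3:ℝ) * (C / ((y ^ 2 + A) * ((z - y) ^ 2 + B))) := by
  have hy1 : (1 : ℝ) ≤ y := by have := abs_nonneg z; linarith
  have hy0 : (0 : ℝ) < y := by linarith
  have hzy : |z| ≤ y := by linarith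
  have hD : 0 < (y ^ 2 + A) * ((z - y) ^ 2 + B) := by positivity
  have hKd : (0 : ℝ) < (1 + A) * (4 + B) := by positivity
  have h1 : y ^ 2 + A ≤ (1 + A) * y ^ 2 := by
    nlinarith [mul_le_mul_of_nonneg_left (show (1:ℝ) ≤ y ^ 2 by nlinarith) hA.le]
  have h2 : (z - y) ^ 2 + B ≤ (4 + B) * y ^ 2 := by
    have hz1 : -y ≤ z := by have := abs_le.mp hzy; linarith [this.1]
    have hz2 : z ≤ y := (abs_le.mp hzy).2
    have : (z - y) ^ 2 ≤ (2 * y) ^ 2 := sq_le_sq' (by linarith) (by linarith)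
    nlinarith
  have hDle : (y ^ 2 + A) * ((z - y) ^ 2 + B) ≤ (1 + A) * (4 + B) * y ^ 4 := by
    have := mul_le_mul h1 h2 (by positivity) (by positivity)
    nlinarith
  have habs : |y| ^ (3:ℝ) = y ^ 3 := by
    rw [abs_of_pos hy0, show (3:ℝ) = ((3:ℕ):ℝ) by norm_num, Real.rpow_natCast]
  rw [habs, ← div_eq_mul_inv, ← mul_div_assoc, div_le_div_iff₀ hy0 hD]
  have key : C / ((1 + A) * (4 + B)) * ((1 + A) * (4 + B) * y ^ 4) = C * y ^ 4 := by
    field_simp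
  calc C / ((1 + A) * (4 + B)) * ((y ^ 2 + A) * ((z - y) ^ 2 + B))
      ≤ C / ((1 + A) * (4 + B)) * ((1 + A) * (4 + B) * y ^ 4) :=
        mul_le_mul_of_nonneg_left hDle (by positivity)
    _ = C * y ^ 4 := key
    _ = y ^ 3 * C * y := by ring

private lemma cb_lintegral_inv_top {K R : ℝ} (hK : 0 < K) (hR : 0 < R) :
    ∫⁻ y in Ioi R, ENNReal.ofReal (K * y⁻¹) = ⊤ := by
  by_contra h
  have hmeas : AEStronglyMeasurable (fun y : ℝ => K * y⁻¹) (volume.restrict (Ioi R)) :=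
    ((measurable_const.mul measurable_inv).aestronglyMeasurable)
  have hae : 0 ≤ᵐ[volume.restrict (Ioi R)] (fun y : ℝ => K * y⁻¹) := by
    refine (ae_restrict_iff' measurableSet_Ioi).2 (Filter.Eventually.of_forall fun y hy => ?_)
    have hy0 : (0:ℝ) < y := hR.trans hy
    positivity
  have hfin : HasFiniteIntegral (fun y : ℝ => K * y⁻¹) (volume.restrict (Ioi R)) := by
    rw [hasFiniteIntegral_iff_ofReal hae]
    exact lt_top_iff_ne_top.2 h
  have hint : IntegrableOn (fun y : ℝ => K * y⁻¹) (Ioi R) := ⟨hmeas, hfin⟩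
  have hint2 : IntegrableOn (fun y : ℝ => y⁻¹) (Ioi R) := by
    have := hint.const_mul K⁻¹
    simpa [← mul_assoc, inv_mul_cancel₀ hK.ne', one_mul, IntegrableOn] using this
  have hnot : ¬ IntegrableOn (fun x : ℝ => x ^ (-1:ℝ)) (Ioi R) := by
    rw [integrableOn_Ioi_rpow_iff hR]; norm_num
  exact hnot (by simpa [Real.rpow_neg_one] using hint2)

private lemma cb_integrableOn_comp_neg {g : ℝ → ℝ} {R : ℝ} (h : IntegrableOn g (Ioi R)) :
    IntegrableOn (fun x => g (-x)) (Iio (-R)) := by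
  have A : MeasurableEmbedding fun x : ℝ => -x :=
    (Homeomorph.neg ℝ).isClosedEmbedding.measurableEmbedding
  have h' : IntegrableOn g (Ioi R) (Measure.map (fun x : ℝ => -x) volume) := by
    rwa [Measure.map_neg_eq_self (volume : Measure ℝ)]
  have := (MeasurableEmbedding.integrableOn_map_iff A).mp h'
  have hs : (fun x : ℝ => -x) ⁻¹' Ioi R = Iio (-R) := by
    ext x; simp [lt_neg]
  rwa [hs] at this

set_option maxHeartbeats 1000000 in
/-- Moments of the Cauchy bridge: `∫ |y|^p f_{tT}(y;z) dy < ∞` for `0 < p < 3`,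
while `∫ |y|^3 f_{tT}(y;z) dy = ∞`. -/
theorem cauchy_bridge_moments (c T t z : ℝ)
    (hc : 0 < c) (ht : 0 < t) (htT : t < T) :
    (∀ p : ℝ, 0 < p → p < 3 →
        (∫⁻ y : ℝ, ENNReal.ofReal (|y| ^ p * cauchyBridgeDen c T t z y)) < ⊤) ∧
      (∫⁻ y : ℝ, ENNReal.ofReal (|y| ^ (3 : ℝ) * cauchyBridgeDen c T t z y)) = ⊤ := by
  have hT : 0 < T := ht.trans htT
  have hTt : 0 < T - t := sub_pos.2 htT
  set A : ℝ := c ^ 2 * t ^ 2 with hA_def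
  set B : ℝ := c ^ 2 * (T - t) ^ 2 with hB_def
  set C : ℝ := c * t * (T - t) / (Real.pi * T) * (z ^ 2 + c ^ 2 * T ^ 2) with hC_def
  have hA : 0 < A := by positivity
  have hB : 0 < B := by positivity
  have hC : 0 < C := by
    have hpi := Real.pi_pos
    apply mul_pos (div_pos (by positivity) (by positivity)) (by positivity)
  have hden : ∀ y : ℝ, cauchyBridgeDen c T t z y = C / ((y ^ 2 + A) * ((z - y) ^ 2 + B)) := by
    intro y
    rw [cauchyBridgeDen, hC_def, hA_def, hB_def]
    ring
  have hDpos : ∀ y : ℝ, 0 < (y ^ 2 + A) * ((z - y) ^ 2 + B) := fun y => by positivity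
  have hden_pos : ∀ y : ℝ, 0 < cauchyBridgeDen c T t z y := by
    intro y; rw [hden y]; exact div_pos hC (hDpos y)
  have hcont : ∀ p : ℝ, 0 ≤ p →
      Continuous (fun y : ℝ => |y| ^ p * cauchyBridgeDen c T t z y) := by
    intro p hp
    have h1 : Continuous (fun y : ℝ => |y| ^ p) :=
      continuous_abs.rpow_const fun x => Or.inr hp
    have h2 : Continuous (fun y : ℝ => cauchyBridgeDen c T t z y) := by
      simp only [hden]
      exact continuous_const.div (by continuity) fun y => (hDpos y).ne'
    exact h1.mul h2
  set R : ℝ := 2 * |z| + 1 with hR_def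
  have hR : 0 < R := by have := abs_nonneg z; positivity
  have hInt : ∀ p : ℝ, 0 < p → p < 3 →
      Integrable (fun y : ℝ => |y| ^ p * cauchyBridgeDen c T t z y) := by
    intro p hp hp3
    set g : ℝ → ℝ := fun y => |y| ^ p * cauchyBridgeDen c T t z y with hg_def
    have hgcont := hcont p hp.le
    have hgnonneg : ∀ y, 0 ≤ g y :=
      fun y => mul_nonneg (Real.rpow_nonneg (abs_nonneg y) p) (hden_pos y).le
    have hgbound : ∀ y : ℝ, R ≤ |y| → g y ≤ 4 * C * |y| ^ (p - 4) := by
      intro y hy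
      rw [hg_def]; simp only [hden]
      exact cb_aux_bound hC hA hB hy
    have hmaj : IntegrableOn (fun y : ℝ => 4 * C * y ^ (p - 4)) (Ioi R) :=
      (integrableOn_Ioi_rpow_of_lt (by linarith) hR).const_mul (4 * C)
    have h3 : IntegrableOn g (Ioi R) := by
      refine Integrable.mono hmaj (hgcont.aestronglyMeasurable.restrict) ?_
      refine (ae_restrict_iff' measurableSet_Ioi).2 (Filter.Eventually.of_forall fun y hy => ?_)
      have hy0 : (0:ℝ) < y := hR.trans hy
      have habs : |y| = y := abs_of_pos hy0
      rw [Real.norm_eq_abs, Real.norm_eq_abs, abs_of_nonneg (hgnonneg y)]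
      calc g y ≤ 4 * C * |y| ^ (p - 4) := hgbound y (by rw [habs]; exact hy.le)
        _ = 4 * C * y ^ (p - 4) := by rw [habs]
        _ ≤ |4 * C * y ^ (p - 4)| := le_abs_self _
    have h1 : IntegrableOn g (Iio (-R)) := by
      have hmaj' : IntegrableOn (fun x : ℝ => 4 * C * (-x) ^ (p - 4)) (Iio (-R)) :=
        cb_integrableOn_comp_neg hmaj
      refine Integrable.mono hmaj' (hgcont.aestronglyMeasurable.restrict) ?_
      refine (ae_restrict_iff' measurableSet_Iio).2 (Filter.Eventually.of_forall fun y hy => ?_)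
      have hy0 : y < 0 := hy.trans (by linarith)
      have habs : |y| = -y := abs_of_neg hy0
      rw [Real.norm_eq_abs, Real.norm_eq_abs, abs_of_nonneg (hgnonneg y)]
      calc g y ≤ 4 * C * |y| ^ (p - 4) := hgbound y (by rw [habs]; simp only [mem_Iio] at hy; linarith)
        _ = 4 * C * (-y) ^ (p - 4) := by rw [habs]
        _ ≤ |4 * C * (-y) ^ (p - 4)| := le_abs_self _
    have h2 : IntegrableOn g (Icc (-R) R) := hgcont.integrableOn_Icc
    have hcover : Iio (-R) ∪ Icc (-R) R ∪ Ioi R = (univ : Set ℝ) := by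
      ext x
      simp only [mem_union, mem_Iio, mem_Icc, mem_Ioi, mem_univ, iff_true]
      rcases lt_or_ge x (-R) with h | h
      · exact Or.inl (Or.inl h)
      · rcases le_or_gt x R with h' | h'
        · exact Or.inl (Or.inr ⟨h, h'⟩)
        · exact Or.inr h'
    have : IntegrableOn g (Iio (-R) ∪ Icc (-R) R ∪ Ioi R) := (h1.union h2).union h3
    rw [hcover] at this
    exact integrableOn_univ.mp this
  constructor
  · intro p hp hp3
    exact (hInt p hp hp3).lintegral_lt_top
  · -- divergence of the third moment
    set R' : ℝ := 2 * |z| + A + B + 1 with hR'_def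
    have hR' : 0 < R' := by have := abs_nonneg z; positivity
    set K : ℝ := C / ((1 + A) * (4 + B)) with hK_def
    have hK : 0 < K := div_pos hC (by positivity)
    have hlow : ∀ y ∈ Ioi R', ENNReal.ofReal (K * y⁻¹) ≤
        ENNReal.ofReal (|y| ^ (3:ℝ) * cauchyBridgeDen c T t z y) := by
      intro y hy
      apply ENNReal.ofReal_le_ofReal
      rw [hden y]
      exact cb_aux_lower hC hA hB (le_of_lt hy)
    have hstep : (∫⁻ y in Ioi R', ENNReal.ofReal (K * y⁻¹)) ≤
        ∫⁻ y in Ioi R', ENNReal.ofReal (|y| ^ (3:ℝ) * cauchyBridgeDen c T t z y) := by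
      refine setLIntegral_mono' measurableSet_Ioi fun y hy => hlow y hy
    have htop := cb_lintegral_inv_top hK hR'
    have : (∫⁻ y in Ioi R', ENNReal.ofReal (|y| ^ (3:ℝ) * cauchyBridgeDen c T t z y)) = ⊤ :=
      top_le_iff.mp (htop ▸ hstep)
    refine top_le_iff.mp ?_
    calc (⊤ : ENNReal) = ∫⁻ y in Ioi R', ENNReal.ofReal (|y| ^ (3:ℝ) * cauchyBridgeDen c T t z y) :=
          this.symm
      _ ≤ ∫⁻ y : ℝ, ENNReal.ofReal (|y| ^ (3:ℝ) * cauchyBridgeDen c T t z y) :=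
          setLIntegral_le_lintegral _ _
end

section
/- Suppose f_t are the marginal densities of a Lévy process on [0,T] and there exist constants C, K < ∞ and β > 0 such that |x|^{1+β} f_t(x) < K for all |x| ≥ C and all t ∈ (0,T]. Then for every α ∈ (0,β), every t ∈ (0,T), and every z with 0 < f_T(z) < ∞, the bridge marginal density f_{tT}(x;z) = f_t(x)f_{T−t}(z−x)/f_T(z) satisfies ∫_{−∞}^∞ |x|^{1+2α} f_{tT}(x;z) dx < ∞. -/
open MeasureTheory Real Set

/-- If the marginal densities `f_t` of a Lévy process on `[0,T]` satisfy the uniform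
tail bound `|x|^{1+β} f_t(x) < K` for `|x| ≥ C` and all `t ∈ (0,T]`, then the bridge
marginal density `f_{tT}(x;z) = f_t(x) f_{T−t}(z−x)/f_T(z)` has a finite moment of
order `1 + 2α` for every `α ∈ (0,β)`. -/
theorem levy_bridge_moment_bound (f : ℝ → ℝ → ℝ) (T : ℝ) (hT : 0 < T)
    (hmeas : ∀ t, Measurable (f t))
    (hnonneg : ∀ t x, 0 ≤ f t x)
    (hdensity : ∀ t, 0 < t → t ≤ T → (∫ x : ℝ, f t x) = 1)
    (hCK : ∀ s t : ℝ, 0 < s → s < t → t ≤ T →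
      ∀ x : ℝ, f t x = ∫ u : ℝ, f (t - s) (x - u) * f s u)
    (C K β : ℝ) (hβ : 0 < β)
    (hbound : ∀ t x : ℝ, 0 < t → t ≤ T → C ≤ |x| → |x| ^ (1 + β) * f t x < K)
    (α : ℝ) (hα0 : 0 < α) (hαβ : α < β)
    (t : ℝ) (ht : 0 < t) (htT : t < T)
    (z : ℝ) (hz : 0 < f T z) :
    Integrable (fun x : ℝ => |x| ^ (1 + 2 * α) * (f t x * f (T - t) (z - x) / f T z)) := by
  have hTt : 0 < T - t := by linarith
  have hTtT : T - t ≤ T := by linarith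
  have hK : 0 < K :=
    lt_of_le_of_lt
      (mul_nonneg (Real.rpow_nonneg (abs_nonneg _) _) (hnonneg t |C|))
      (hbound t |C| ht htT.le ((le_abs_self C).trans (le_abs_self _)))
  -- the convolution identity at time T
  have hconv : f T z = ∫ u : ℝ, f (T - t) (z - u) * f t u := hCK t T ht htT le_rfl z
  have hint : Integrable (fun u : ℝ => f (T - t) (z - u) * f t u) := by
    by_contra hni
    rw [integral_undef hni] at hconv
    exact absurd hconv (by linarith)
  have hint' : Integrable (fun x : ℝ => f t x * f (T - t) (z - x)) := by
    simpa [mul_comm] using hint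
  -- the core function
  set g : ℝ → ℝ := fun x => |x| ^ (1 + 2 * α) * (f t x * f (T - t) (z - x)) with hg
  have hgmeas : Measurable g := by
    apply Measurable.mul
    · exact ((Real.continuous_rpow_const (by linarith : (0:ℝ) ≤ 1 + 2 * α)).measurable).comp
        measurable_abs
    · exact (hmeas t).mul ((hmeas (T - t)).comp (measurable_const.sub measurable_id))
  set R : ℝ := 2 * |z| + 2 * |C| + 2 with hR
  have hR2 : (2:ℝ) ≤ R := by
    simp only [hR]; linarith [abs_nonneg z, abs_nonneg C]
  have hR0 : (0:ℝ) < R := by linarith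
  set p : ℝ := 2 * α - 2 * β - 1 with hp
  have hp1 : p < -1 := by simp only [hp]; linarith
  set c : ℝ := K ^ 2 * 2 ^ (1 + β) with hc
  have hc0 : 0 < c := by positivity
  -- tail bound : for R ≤ |x|, g x ≤ c * |x| ^ p
  have htail : ∀ x : ℝ, R ≤ |x| → g x ≤ c * |x| ^ p := by
    intro x hx
    have hA0 : (0 : ℝ) < |x| := by linarith
    have hApow : (0:ℝ) < |x| ^ (1 + β) := Real.rpow_pos_of_pos hA0 _
    have hCx : C ≤ |x| := by
      have : C ≤ |C| := le_abs_self C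
      linarith [abs_nonneg z, abs_nonneg C]
    have h1 : f t x ≤ K / |x| ^ (1 + β) := by
      rw [le_div_iff₀ hApow]
      have := hbound t x ht htT.le hCx
      linarith [this, mul_comm (f t x) (|x| ^ (1 + β))]
    have hzx : |x| / 2 ≤ |z - x| := by
      have h1 : |z - x| ≥ |x| - |z| := by
        have := abs_sub_abs_le_abs_sub x z
        rw [abs_sub_comm x z] at this
        linarith
      have h2 : |z| ≤ R / 2 := by simp only [hR]; linarith [abs_nonneg C]
      linarith
    have hCzx : C ≤ |z - x| := by
      have : C ≤ |C| := le_abs_self C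
      have h2 : |z| + 2 * |C| + 2 ≤ |x| - |z| := by
        simp only [hR] at hx; linarith
      have h1 : |z - x| ≥ |x| - |z| := by
        have := abs_sub_abs_le_abs_sub x z
        rw [abs_sub_comm x z] at this
        linarith
      linarith
    have hzx0 : (0:ℝ) < |z - x| ^ (1 + β) := Real.rpow_pos_of_pos (by linarith) _
    have h2 : f (T - t) (z - x) ≤ K * 2 ^ (1 + β) / |x| ^ (1 + β) := by
      have hb : f (T - t) (z - x) ≤ K / |z - x| ^ (1 + β) := by
        rw [le_div_iff₀ hzx0]
        have := hbound (T - t) (z - x) hTt hTtT hCzx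
        linarith [this, mul_comm (f (T - t) (z - x)) (|z - x| ^ (1 + β))]
      have hmono : (|x| / 2) ^ (1 + β) ≤ |z - x| ^ (1 + β) :=
        Real.rpow_le_rpow (by positivity) hzx (by linarith)
      have h3 : K / |z - x| ^ (1 + β) ≤ K / (|x| / 2) ^ (1 + β) :=
        div_le_div_of_nonneg_left hK.le (Real.rpow_pos_of_pos (by positivity) _) hmono
      have h4 : (|x| / 2) ^ (1 + β) = |x| ^ (1 + β) / 2 ^ (1 + β) :=
        Real.div_rpow (abs_nonneg x) (by norm_num : (0:ℝ) ≤ 2) (1 + β)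
      have h5 : K / (|x| / 2) ^ (1 + β) = K * 2 ^ (1 + β) / |x| ^ (1 + β) := by
        rw [h4]
        field_simp
      linarith [hb, h3, h5 ▸ h3]
    have hpow : |x| ^ (1 + 2 * α) = |x| ^ p * (|x| ^ (1 + β) * |x| ^ (1 + β)) := by
      rw [← Real.rpow_add hA0, ← Real.rpow_add hA0]
      congr 1
      simp only [hp]; ring
    have hfm : f t x * f (T - t) (z - x) ≤
        (K / |x| ^ (1 + β)) * (K * 2 ^ (1 + β) / |x| ^ (1 + β)) :=
      mul_le_mul h1 h2 (hnonneg _ _) (by positivity)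
    calc g x ≤ |x| ^ (1 + 2 * α) *
          ((K / |x| ^ (1 + β)) * (K * 2 ^ (1 + β) / |x| ^ (1 + β))) := by
          exact mul_le_mul_of_nonneg_left hfm (Real.rpow_nonneg (abs_nonneg _) _)
      _ = c * |x| ^ p := by
          rw [hpow, hc]
          field_simp
    -- done tail
  -- the dominating function
  set S : Set ℝ := {x : ℝ | R ≤ |x|} with hS
  set h : ℝ → ℝ := fun x =>
    R ^ (1 + 2 * α) * (f t x * f (T - t) (z - x)) + S.indicator (fun x => c * |x| ^ p) x
      with hh
  have hIci : Integrable ((Ici R).indicator (fun x : ℝ => c * |x| ^ p)) := by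
    rw [integrable_indicator_iff measurableSet_Ici]
    rw [integrableOn_Ici_iff_integrableOn_Ioi]
    have : IntegrableOn (fun x : ℝ => x ^ p) (Ioi R) := integrableOn_Ioi_rpow_of_lt hp1 hR0
    have h2 : IntegrableOn (fun x : ℝ => c * |x| ^ p) (Ioi R) := by
      apply IntegrableOn.congr_fun (this.const_mul c) _ measurableSet_Ioi
      intro x hx
      simp only
      rw [abs_of_pos (lt_trans hR0 hx)]
    exact h2
  have hIic : Integrable ((Iic (-R)).indicator (fun x : ℝ => c * |x| ^ p)) := by
    have := hIci.comp_neg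
    apply this.congr
    filter_upwards with x
    by_cases hx : x ∈ Iic (-R)
    · have hxle : x ≤ -R := mem_Iic.mp hx
      have hx' : -x ∈ Ici R := mem_Ici.mpr (by linarith)
      rw [indicator_of_mem hx', indicator_of_mem hx, abs_neg]
    · have hxle : ¬ x ≤ -R := fun hcon => hx (mem_Iic.mpr hcon)
      have hx' : -x ∉ Ici R := fun hcon => hxle (by linarith [mem_Ici.mp hcon])
      rw [indicator_of_notMem hx', indicator_of_notMem hx]
  have hSsplit : S.indicator (fun x : ℝ => c * |x| ^ p) =
      fun x => (Iic (-R)).indicator (fun x : ℝ => c * |x| ^ p) x +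
        (Ici R).indicator (fun x : ℝ => c * |x| ^ p) x := by
    funext x
    have : S = Iic (-R) ∪ Ici R := by
      ext y
      simp only [hS, mem_setOf_eq, mem_union, mem_Iic, mem_Ici, le_abs]
      constructor
      · rintro (h | h); · right; exact h
        · left; linarith
      · rintro (h | h); · right; linarith
        · left; exact h
    rw [this, indicator_union_of_disjoint]
    exact Iic_disjoint_Ici.mpr (not_le.mpr (by linarith))
  have hhint : Integrable h := by
    apply Integrable.add (hint'.const_mul _)
    rw [hSsplit]
    exact hIic.add hIci
  -- domination
  have hgnonneg : ∀ x, 0 ≤ g x :=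
    fun x => mul_nonneg (Real.rpow_nonneg (abs_nonneg _) _)
      (mul_nonneg (hnonneg _ _) (hnonneg _ _))
  have hgint : Integrable g := by
    apply hhint.mono' hgmeas.aestronglyMeasurable
    filter_upwards with x
    rw [Real.norm_of_nonneg (hgnonneg x)]
    by_cases hx : R ≤ |x|
    · have h1 : g x ≤ S.indicator (fun x => c * |x| ^ p) x := by
        rw [indicator_of_mem (by exact hx)]
        exact htail x hx
      have h2 : 0 ≤ R ^ (1 + 2 * α) * (f t x * f (T - t) (z - x)) := by
        apply mul_nonneg (Real.rpow_nonneg hR0.le _)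
        exact mul_nonneg (hnonneg _ _) (hnonneg _ _)
      simp only [hh]; linarith
    · push_neg at hx
      have h1 : g x ≤ R ^ (1 + 2 * α) * (f t x * f (T - t) (z - x)) := by
        apply mul_le_mul_of_nonneg_right _ (mul_nonneg (hnonneg _ _) (hnonneg _ _))
        exact Real.rpow_le_rpow (abs_nonneg _) hx.le (by linarith)
      have h2 : 0 ≤ S.indicator (fun x => c * |x| ^ p) x :=
        indicator_nonneg (fun y _ => by positivity) x
      simp only [hh]; linarith
  have := hgint.div_const (f T z)
  apply this.congr
  filter_upwards with x
  simp only [hg]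
  ring
end

section
/- Let {N_{tT}} be a Poisson random bridge on [0,T] with terminal mass function P having finite mean. Then the intensity of {N_{tT}} at time s given N_{sT} is λ_s = (E[N_{TT} | N_{sT}] − N_{sT})/(T − s); i.e., lim_{t→0⁺} ℚ[N_{s+t,T} − N_{sT} = 1 | N_{sT}]/t = (E[N_{TT}|N_{sT}] − N_{sT})/(T − s). -/
open Real Filter Set

/-- The (unnormalised) conditional terminal weight of a Poisson random bridge:
given `N_{sT} = n`, the terminal value `k` has weight
`(k!/(k−n)!) (1 − s/T)^k P(k)` for `k ≥ n`. -/
noncomputable def prbWeight (P : ℕ → ℝ) (T s : ℝ) (n k : ℕ) : ℝ :=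
  if n ≤ k then ((k.factorial : ℝ) / ((k - n).factorial : ℝ)) * (1 - s / T) ^ k * P k
  else 0

/-- The conditional terminal probability mass function `P_s` of a Poisson random bridge
given `N_{sT} = n`. -/
noncomputable def prbCondPMF (P : ℕ → ℝ) (T s : ℝ) (n : ℕ) (k : ℕ) : ℝ :=
  prbWeight P T s n k / ∑' j : ℕ, prbWeight P T s n j

/-- Probability generating function of a mass function on `ℕ`. -/
noncomputable def pgf (Q : ℕ → ℝ) (z : ℝ) : ℝ := ∑' k : ℕ, z ^ k * Q k

/-- Mean of a mass function on `ℕ`. -/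
noncomputable def pmfMean (Q : ℕ → ℝ) : ℝ := ∑' k : ℕ, (k : ℝ) * Q k

/-- Key scalar limit: `(1 - (1 - t/c)^m)/t → m/c` as `t → 0⁺`. -/
private lemma prb_slope_tendsto (c : ℝ) (hc : 0 < c) (m : ℕ) :
    Tendsto (fun t : ℝ => (1 - (1 - t / c) ^ m) / t) (nhdsWithin 0 (Set.Ioi 0))
      (nhds ((m : ℝ) / c)) := by
  have h1 : HasDerivAt (fun t : ℝ => 1 - t / c) (-(1 / c)) 0 := by
    simpa using ((hasDerivAt_id (0 : ℝ)).div_const c).const_sub 1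
  have h2 : HasDerivAt (fun t : ℝ => (1 - t / c) ^ m) (-((m : ℝ) / c)) 0 := by
    have := h1.fun_pow m
    simpa [mul_neg, mul_one_div, div_eq_mul_inv] using this
  have h3 : HasDerivAt (fun t : ℝ => 1 - (1 - t / c) ^ m) ((m : ℝ) / c) 0 := by
    simpa using h2.const_sub 1
  have h4 := hasDerivAt_iff_tendsto_slope.1 h3
  have h5 : Tendsto (slope (fun t : ℝ => 1 - (1 - t / c) ^ m) 0)
      (nhdsWithin 0 (Set.Ioi 0)) (nhds ((m : ℝ) / c)) :=
    h4.mono_left (nhdsWithin_mono _ (fun x hx => ne_of_gt hx))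
  refine h5.congr (fun t => ?_)
  simp [slope_def_field]

/-- The intensity of a Poisson random bridge at time `s`, given `N_{sT} = n`, is
`(E[N_{TT} | N_{sT}] − N_{sT})/(T − s)`: the probability of a jump in `(s, s+t]`
given `N_{sT} = n`, which equals
`1 − ((T−s)/(T−s−t))^n G_{P_s}((T−s−t)/(T−s))`, divided by `t`, tends to
`(E[N_{TT} | N_{sT} = n] − n)/(T − s)` as `t → 0⁺`. -/
theorem poisson_random_bridge_intensity (P : ℕ → ℝ)
    (hnonneg : ∀ k, 0 ≤ P k) (hsum : Summable P) (hone : (∑' k : ℕ, P k) = 1)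
    (hmean : Summable fun k : ℕ => (k : ℝ) * P k)
    (T s : ℝ) (hT : 0 < T) (hs : 0 < s) (hsT : s < T) (n : ℕ)
    (hD : 0 < ∑' j : ℕ, prbWeight P T s n j) :
    Tendsto
      (fun t : ℝ =>
        (1 - ((T - s) / (T - s - t)) ^ n *
            pgf (prbCondPMF P T s n) ((T - s - t) / (T - s))) / t)
      (nhdsWithin 0 (Set.Ioi 0))
      (nhds ((pmfMean (prbCondPMF P T s n) - n) / (T - s))) := by
  have hTs : 0 < T - s := sub_pos.2 hsT
  set w : ℕ → ℝ := prbWeight P T s n with hw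
  set D : ℝ := ∑' j : ℕ, prbWeight P T s n j with hDdef
  set Q : ℕ → ℝ := prbCondPMF P T s n with hQdef
  have hQfun : Q = fun k => w k / D := funext fun k => rfl
  have hr0pos : 0 < 1 - s / T := by
    have : s / T < 1 := (div_lt_one hT).2 hsT
    linarith
  have hr0lt : 1 - s / T < 1 := by
    have : 0 < s / T := div_pos hs hT
    linarith
  have hwnn : ∀ k, 0 ≤ w k := by
    intro k
    rw [hw, prbWeight]
    split
    · exact mul_nonneg (mul_nonneg (div_nonneg (by positivity) (by positivity))
        (pow_nonneg hr0pos.le _)) (hnonneg k)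
    · exact le_refl 0
  have hw0 : ∀ k, k < n → w k = 0 := by
    intro k hk; rw [hw, prbWeight, if_neg (by omega)]
  have hQ0 : ∀ k, k < n → Q k = 0 := by
    intro k hk; rw [hQfun]; simp [hw0 k hk]
  have hQnn : ∀ k, 0 ≤ Q k := by
    intro k; rw [hQfun]; exact div_nonneg (hwnn k) hD.le
  -- boundedness of `k^j (1-s/T)^k`
  have hbd : ∀ j : ℕ, ∃ M : ℝ, ∀ k : ℕ, (k : ℝ) ^ j * (1 - s / T) ^ k ≤ M := by
    intro j
    have hsm : Summable (fun k : ℕ => (k : ℝ) ^ j * (1 - s / T) ^ k) :=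
      summable_pow_mul_geometric_of_norm_lt_one j
        (by rw [Real.norm_eq_abs, abs_of_pos hr0pos]; exact hr0lt)
    obtain ⟨M, hM⟩ := hsm.tendsto_atTop_zero.bddAbove_range
    exact ⟨M, fun k => hM ⟨k, rfl⟩⟩
  have hfle : ∀ k, n ≤ k → (k.factorial : ℝ) / ((k - n).factorial : ℝ) ≤ (k : ℝ) ^ n := by
    intro k hkn
    have h1 : ((k - n).factorial : ℝ) * (k.descFactorial n : ℝ) = (k.factorial : ℝ) := by
      exact_mod_cast congrArg (Nat.cast : ℕ → ℝ) (Nat.factorial_mul_descFactorial hkn)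
    have hne : ((k - n).factorial : ℝ) ≠ 0 := Nat.cast_ne_zero.2 (Nat.factorial_ne_zero _)
    rw [← h1, mul_div_cancel_left₀ _ hne]
    exact_mod_cast Nat.descFactorial_le_pow k n
  have hwle : ∀ j : ℕ, ∀ k : ℕ, (k : ℝ) ^ j * w k ≤ ((k : ℝ) ^ (j + n) * (1 - s / T) ^ k) * P k := by
    intro j k
    rw [hw, prbWeight]
    split
    case isTrue h =>
      calc (k : ℝ) ^ j * ((k.factorial : ℝ) / ((k - n).factorial : ℝ) * (1 - s / T) ^ k * P k)
          ≤ (k : ℝ) ^ j * ((k : ℝ) ^ n * (1 - s / T) ^ k * P k) := by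
            apply mul_le_mul_of_nonneg_left _ (by positivity)
            apply mul_le_mul_of_nonneg_right _ (hnonneg k)
            exact mul_le_mul_of_nonneg_right (hfle k h) (by positivity)
        _ = ((k : ℝ) ^ (j + n) * (1 - s / T) ^ k) * P k := by rw [pow_add]; ring
    case isFalse h =>
      have : (0:ℝ) ≤ ((k : ℝ) ^ (j + n) * (1 - s / T) ^ k) * P k := by
        have := hnonneg k; positivity
      simpa using this
  have hsummw : ∀ j : ℕ, Summable (fun k : ℕ => (k : ℝ) ^ j * w k) := by
    intro j
    obtain ⟨M, hM⟩ := hbd (j + n)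
    refine Summable.of_nonneg_of_le (fun k => mul_nonneg (by positivity) (hwnn k))
      (fun k => ?_) (hsum.mul_left M)
    calc (k : ℝ) ^ j * w k ≤ ((k : ℝ) ^ (j + n) * (1 - s / T) ^ k) * P k := hwle j k
      _ ≤ M * P k := mul_le_mul_of_nonneg_right (hM k) (hnonneg k)
  have hw_summ : Summable w := by simpa using hsummw 0
  have hkw_summ : Summable (fun k : ℕ => (k : ℝ) * w k) := by simpa using hsummw 1
  have hQ_summ : Summable Q := by
    rw [hQfun]; exact hw_summ.div_const D
  have hkQ_summ : Summable (fun k : ℕ => (k : ℝ) * Q k) := by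
    rw [hQfun]
    simpa [mul_div_assoc] using hkw_summ.div_const D
  have hQ1 : (∑' k, Q k) = 1 := by
    rw [hQfun, tsum_div_const]
    exact div_self hD.ne'
  -- the family of functions
  set L : ℝ → ℕ → ℝ :=
    fun t k => ((1 - (1 - t / (T - s)) ^ (k - n)) / t) * Q k with hL
  have hptw : ∀ k, Tendsto (fun t => L t k) (nhdsWithin 0 (Set.Ioi 0))
      (nhds (((↑(k - n) : ℝ) / (T - s)) * Q k)) :=
    fun k => (prb_slope_tendsto (T - s) hTs (k - n)).mul_const (Q k)
  have hIoo : Ioo (0:ℝ) (T - s) ∈ nhdsWithin (0:ℝ) (Set.Ioi 0) :=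
    Ioo_mem_nhdsGT_of_mem ⟨le_refl 0, hTs⟩
  have h_bound : ∀ᶠ t in nhdsWithin (0:ℝ) (Set.Ioi 0),
      ∀ k, ‖L t k‖ ≤ (k : ℝ) * Q k / (T - s) := by
    filter_upwards [hIoo] with t ht
    intro k
    have ht0 : 0 < t := ht.1
    have hx : 0 < t / (T - s) := div_pos ht0 hTs
    have hx1 : t / (T - s) < 1 := (div_lt_one hTs).2 (by linarith [ht.2])
    have hr : (0:ℝ) ≤ 1 - t / (T - s) := by linarith
    have hrle : (1 - t / (T - s)) ^ (k - n) ≤ 1 := pow_le_one₀ hr (by linarith)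
    have h0 : 0 ≤ (1 - (1 - t / (T - s)) ^ (k - n)) / t := div_nonneg (by linarith) ht0.le
    have hber : 1 - (1 - t / (T - s)) ^ (k - n) ≤ (↑(k - n) : ℝ) * (t / (T - s)) := by
      have h := one_add_mul_le_pow (a := -(t / (T - s))) (by linarith) (k - n)
      have h' : 1 - (↑(k - n) : ℝ) * (t / (T - s)) ≤ (1 - t / (T - s)) ^ (k - n) := by
        simpa [mul_neg, ← sub_eq_add_neg] using h
      linarith
    rw [hL, Real.norm_eq_abs, abs_of_nonneg (mul_nonneg h0 (hQnn k))]
    calc ((1 - (1 - t / (T - s)) ^ (k - n)) / t) * Q k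
        ≤ (((↑(k - n) : ℝ) * (t / (T - s))) / t) * Q k := by
          apply mul_le_mul_of_nonneg_right _ (hQnn k)
          exact div_le_div_of_nonneg_right hber ht0.le
      _ = ((↑(k - n) : ℝ) / (T - s)) * Q k := by
          congr 1
          field_simp
      _ ≤ ((k : ℝ) / (T - s)) * Q k := by
          apply mul_le_mul_of_nonneg_right _ (hQnn k)
          apply div_le_div_of_nonneg_right _ hTs.le
          exact_mod_cast Nat.sub_le k n
      _ = (k : ℝ) * Q k / (T - s) := by ring
  have hmain : Tendsto (fun t => ∑' k, L t k) (nhdsWithin 0 (Set.Ioi 0))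
      (nhds (∑' k, ((↑(k - n) : ℝ) / (T - s)) * Q k)) :=
    tendsto_tsum_of_dominated_convergence (hkQ_summ.div_const (T - s)) hptw h_bound
  have hval : (∑' k, ((↑(k - n) : ℝ) / (T - s)) * Q k) = (pmfMean Q - n) / (T - s) := by
    have h1 : ∀ k, ((↑(k - n) : ℝ) / (T - s)) * Q k
        = ((k : ℝ) * Q k - (n : ℝ) * Q k) / (T - s) := by
      intro k
      rcases lt_or_ge k n with h | h
      · simp [hQ0 k h]
      · rw [Nat.cast_sub h]; ring
    rw [tsum_congr h1, tsum_div_const]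
    congr 1
    rw [Summable.tsum_sub hkQ_summ (hQ_summ.mul_left (n : ℝ)), tsum_mul_left, hQ1, mul_one, pmfMean]
  rw [← hval]
  refine hmain.congr' (EventuallyEq.symm ?_)
  filter_upwards [hIoo] with t ht
  have ht0 : 0 < t := ht.1
  have hrpos : 0 < (T - s - t) / (T - s) := div_pos (by linarith [ht.2]) hTs
  have hrne : (T - s - t) / (T - s) ≠ 0 := hrpos.ne'
  have hrlt : (T - s - t) / (T - s) < 1 := (div_lt_one hTs).2 (by linarith)
  set r : ℝ := (T - s - t) / (T - s) with hrdef
  have h1 : ((T - s) / (T - s - t)) ^ n * pgf Q r = ∑' k, r ^ (k - n) * Q k := by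
    have hinv : (T - s) / (T - s - t) = r⁻¹ := by
      rw [hrdef, inv_div]
    rw [hinv, pgf, ← tsum_mul_left]
    apply tsum_congr
    intro k
    rcases lt_or_ge k n with h | h
    · simp [hQ0 k h]
    · have hk : r ^ k = r ^ (k - n) * r ^ n := by
        rw [← pow_add, Nat.sub_add_cancel h]
      rw [hk, inv_pow]
      have hrn : r ^ n ≠ 0 := pow_ne_zero _ hrne
      field_simp
  have h2 : Summable (fun k => r ^ (k - n) * Q k) := by
    refine Summable.of_nonneg_of_le
      (fun k => mul_nonneg (pow_nonneg hrpos.le _) (hQnn k)) (fun k => ?_) hQ_summ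
    have hle : r ^ (k - n) ≤ 1 := pow_le_one₀ hrpos.le hrlt.le
    calc r ^ (k - n) * Q k ≤ 1 * Q k := mul_le_mul_of_nonneg_right hle (hQnn k)
      _ = Q k := one_mul _
  have h3 : 1 - (∑' k, r ^ (k - n) * Q k) = ∑' k, (1 - r ^ (k - n)) * Q k := by
    calc 1 - (∑' k, r ^ (k - n) * Q k) = (∑' k, Q k) - ∑' k, r ^ (k - n) * Q k := by
          rw [hQ1]
      _ = ∑' k, (Q k - r ^ (k - n) * Q k) := (Summable.tsum_sub hQ_summ h2).symm
      _ = ∑' k, (1 - r ^ (k - n)) * Q k := tsum_congr fun k => by ring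
  have hrt : r = 1 - t / (T - s) := by
    rw [hrdef]; field_simp
  rw [h1, h3, ← tsum_div_const]
  apply tsum_congr
  intro k
  rw [hL, hrt]
  ring
end

section
/- Let {N_{tT}} be a Poisson random bridge on [0,T] whose terminal value has the negative binomial distribution P(k) = C(k+m−1, k) p^m (1−p)^k for k ∈ ℕ₀, with m > 0 and 0 < p < 1. Then for 0 ≤ s < t < T and 0 ≤ i ≤ j, ℚ[N_{tT} = j | N_{sT} = i] = C(j+m−1, j−i) [ (p + (s/T)(1−p)) / (p + (t/T)(1−p)) ]^{i+m} [ ((t−s)/T)(1−p) / (p + (t/T)(1−p)) ]^{j−i}. In particular every increment of the process has a negative binomial distribution. -/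
open Real Filter MeasureTheory Set

/-- Negative binomial mass function with parameters `m > 0` and `0 < p < 1`,
`P(k) = C(k+m−1, k) p^m (1−p)^k`, where the generalized binomial coefficient is
expressed via Gamma functions. -/
noncomputable def negBinPMF (m p : ℝ) (k : ℕ) : ℝ :=
  (Real.Gamma ((k : ℝ) + m) / (Real.Gamma ((k : ℝ) + 1) * Real.Gamma m)) *
    p ^ m * (1 - p) ^ k

/-- Poisson increment mass function `Q_t(n) = e^{−λt}(λt)^n/n!`. -/
noncomputable def poissonPMF (lam t : ℝ) (n : ℕ) : ℝ :=
  Real.exp (-(lam * t)) * (lam * t) ^ n / (n.factorial : ℝ)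

/-- The weight `φ_t(k;j) = Q_{T−t}(k−j) P(k)/Q_T(k)` appearing in the transition law of
a Lévy (Poisson) random bridge, zero unless `j ≤ k`. -/
noncomputable def prbPhi (lam T : ℝ) (P : ℕ → ℝ) (t : ℝ) (k j : ℕ) : ℝ :=
  if j ≤ k then poissonPMF lam (T - t) (k - j) * P k / poissonPMF lam T k else 0


lemma summable_gamma_series {a x : ℝ} (ha : 0 < a) (hx0 : 0 < x) (hx1 : x < 1) :
    Summable (fun n : ℕ => Real.Gamma ((n : ℝ) + a) / (n.factorial : ℝ) * x ^ n) := by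
  set f : ℕ → ℝ := fun n => Real.Gamma ((n : ℝ) + a) / (n.factorial : ℝ) * x ^ n with hf
  have hfpos : ∀ n, 0 < f n := by
    intro n
    have hg : 0 < Real.Gamma ((n : ℝ) + a) := Real.Gamma_pos_of_pos (by positivity)
    have : (0:ℝ) < (n.factorial : ℝ) := by positivity
    positivity
  apply summable_of_ratio_test_tendsto_lt_one hx1
  · filter_upwards with n using (hfpos n).ne'
  · have hratio : ∀ n : ℕ, ‖f (n + 1)‖ / ‖f n‖ = x * (((n : ℝ) + a) / ((n : ℝ) + 1)) := by
      intro n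
      have hg : 0 < Real.Gamma ((n : ℝ) + a) := Real.Gamma_pos_of_pos (by positivity)
      have hΓ : Real.Gamma (((n : ℕ) + 1 : ℕ) : ℝ) = Real.Gamma ((n : ℝ) + 1) := by push_cast; ring_nf
      have hrec : Real.Gamma (((n + 1 : ℕ) : ℝ) + a) = ((n : ℝ) + a) * Real.Gamma ((n : ℝ) + a) := by
        push_cast
        rw [show (n : ℝ) + 1 + a = ((n : ℝ) + a) + 1 by ring, Real.Gamma_add_one (by positivity)]
      rw [Real.norm_of_nonneg (hfpos _).le, Real.norm_of_nonneg (hfpos _).le]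
      simp only [hf]
      rw [hrec, Nat.factorial_succ]
      have h1 : (0:ℝ) < (n.factorial : ℝ) := by positivity
      field_simp
      push_cast
      ring
    rw [show x = x * 1 by ring]
    refine Tendsto.congr (fun n => (hratio n).symm) (Tendsto.const_mul x ?_)
    have h0 : Tendsto (fun n : ℕ => (a - 1) / ((n : ℝ) + 1)) atTop (nhds 0) := by
      have := (tendsto_const_div_atTop_nhds_zero_nat (a - 1)).comp (tendsto_add_atTop_nat 1)
      refine Tendsto.congr (fun n => ?_) this
      simp [Function.comp]
    have := h0.const_add 1
    simp only [add_zero] at this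
    refine Tendsto.congr (fun n => ?_) this
    have hne : ((n : ℝ) + 1) ≠ 0 := by positivity
    field_simp
    ring

lemma tsum_gamma_series {a x : ℝ} (ha : 0 < a) (hx0 : 0 < x) (hx1 : x < 1) :
    ∑' n : ℕ, Real.Gamma ((n : ℝ) + a) / (n.factorial : ℝ) * x ^ n
      = Real.Gamma a * (1 - x) ^ (-a) := by
  have h1x : 0 < 1 - x := by linarith
  set F : ℕ → ℝ → ℝ :=
    fun n u => x ^ n / (n.factorial : ℝ) * (Real.exp (-u) * u ^ ((n : ℝ) + a - 1)) with hF
  have hint : ∀ n, IntegrableOn (F n) (Ioi 0) volume := fun n =>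
    (Real.GammaIntegral_convergent (show 0 < (n : ℝ) + a by positivity)).const_mul _
  have hval : ∀ n, ∫ u in Ioi 0, F n u
      = x ^ n / (n.factorial : ℝ) * Real.Gamma ((n : ℝ) + a) := by
    intro n
    rw [integral_const_mul, ← Real.Gamma_eq_integral (by positivity)]
  have hnorm : ∀ n, (∫ u in Ioi 0, ‖F n u‖)
      = x ^ n / (n.factorial : ℝ) * Real.Gamma ((n : ℝ) + a) := by
    intro n
    rw [← hval n]
    apply setIntegral_congr_fun measurableSet_Ioi
    intro u hu
    have hu0 : (0:ℝ) < u := hu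
    have h1 : (0:ℝ) < (n.factorial : ℝ) := by positivity
    exact Real.norm_of_nonneg (by positivity)
  have hsum : Summable fun n => ∫ u in Ioi 0, ‖F n u‖ :=
    ((summable_gamma_series ha hx0 hx1).congr (fun n => by ring)).congr
      (fun n => (hnorm n).symm)
  have swap := MeasureTheory.integral_tsum_of_summable_integral_norm hint hsum
  have hpt : ∀ u ∈ Ioi (0:ℝ), (∑' n, F n u) = u ^ (a - 1) * Real.exp (-((1 - x) * u)) := by
    intro u hu
    have hu0 : (0:ℝ) < u := hu
    have hrw : ∀ n : ℕ, F n u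
        = (Real.exp (-u) * u ^ (a - 1)) * ((x * u) ^ n / (n.factorial : ℝ)) := by
      intro n
      have hpow : u ^ ((n : ℝ) + a - 1) = u ^ (n : ℕ) * u ^ (a - 1) := by
        rw [← Real.rpow_natCast u n, ← Real.rpow_add hu0]; ring_nf
      simp only [hF, hpow, mul_pow]
      ring
    rw [tsum_congr hrw, tsum_mul_left]
    have hexp : (∑' n : ℕ, (x * u) ^ n / (n.factorial : ℝ)) = Real.exp (x * u) := by
      rw [Real.exp_eq_exp_ℝ, NormedSpace.exp_eq_tsum_div]
    rw [hexp, show -((1 - x) * u) = -u + x * u by ring, Real.exp_add]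
    ring
  calc ∑' n : ℕ, Real.Gamma ((n : ℝ) + a) / (n.factorial : ℝ) * x ^ n
      = ∑' n : ℕ, ∫ u in Ioi 0, F n u := tsum_congr fun n => by rw [hval]; ring
    _ = ∫ u in Ioi 0, ∑' n, F n u := swap
    _ = ∫ u in Ioi 0, u ^ (a - 1) * Real.exp (-((1 - x) * u)) :=
        setIntegral_congr_fun measurableSet_Ioi hpt
    _ = (1 / (1 - x)) ^ a * Real.Gamma a := Real.integral_rpow_mul_exp_neg_mul_Ioi ha h1x
    _ = Real.Gamma a * (1 - x) ^ (-a) := by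
        rw [one_div, Real.inv_rpow h1x.le, ← Real.rpow_neg h1x.le, mul_comm]

lemma tsum_prbPhi_negBin {lam T m p : ℝ} (hlam : 0 < lam) (hT : 0 < T) (hm : 0 < m)
    (hp0 : 0 < p) (hp1 : p < 1) {u : ℝ} (hu0 : 0 ≤ u) (huT : u < T) (j : ℕ) :
    ∑' k, prbPhi lam T (negBinPMF m p) u k j
      = Real.exp (lam * u) * p ^ m / Real.Gamma m * ((1 - p) / (lam * T)) ^ j *
          (Real.Gamma ((j : ℝ) + m) * (p + u / T * (1 - p)) ^ (-((j : ℝ) + m))) := by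
  have hTu : 0 < T - u := by linarith
  have h1p : 0 < 1 - p := by linarith
  set x : ℝ := (T - u) * (1 - p) / T with hx
  have hx0 : 0 < x := by positivity
  have hx1 : x < 1 := by
    rw [hx, div_lt_one hT]
    nlinarith
  have h1x : 1 - x = p + u / T * (1 - p) := by
    rw [hx]; field_simp; ring
  have hrein : ∑' k, prbPhi lam T (negBinPMF m p) u k j
      = ∑' n : ℕ, prbPhi lam T (negBinPMF m p) u (j + n) j := by
    refine (Function.Injective.tsum_eq (g := fun n => j + n)
      (fun n₁ n₂ h => by simpa using h) ?_).symm
    intro k hk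
    rcases le_or_gt j k with h | h
    · exact ⟨k - j, by simp only []; omega⟩
    · exfalso
      apply hk
      simp [prbPhi, if_neg (Nat.not_le.mpr h)]
  have hterm : ∀ n : ℕ, prbPhi lam T (negBinPMF m p) u (j + n) j
      = (Real.exp (lam * u) * p ^ m / Real.Gamma m * ((1 - p) / (lam * T)) ^ j) *
          (Real.Gamma ((n : ℝ) + ((j : ℝ) + m)) / (n.factorial : ℝ) * x ^ n) := by
    intro n
    rw [prbPhi, if_pos (Nat.le_add_right j n)]
    have hsub : j + n - j = n := by omega
    have hΓfac : Real.Gamma (((j + n : ℕ) : ℝ) + 1) = ((j + n).factorial : ℝ) :=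
      Real.Gamma_nat_eq_factorial (j + n)
    have hΓarg : Real.Gamma (((j + n : ℕ) : ℝ) + m)
        = Real.Gamma ((n : ℝ) + ((j : ℝ) + m)) := by
      congr 1; push_cast; ring
    simp only [negBinPMF, poissonPMF, hsub, hΓfac, hΓarg]
    have hexp : Real.exp (-(lam * (T - u))) = Real.exp (lam * u) * Real.exp (-(lam * T)) := by
      rw [← Real.exp_add]; ring_nf
    have hfac : ((j + n).factorial : ℝ) ≠ 0 := by positivity
    have hnfac : ((n).factorial : ℝ) ≠ 0 := by positivity
    have hexpT : Real.exp (-(lam * T)) ≠ 0 := Real.exp_ne_zero _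
    have hΓm : Real.Gamma m ≠ 0 := (Real.Gamma_pos_of_pos hm).ne'
    have hlT : lam * T ≠ 0 := by positivity
    have hxpow : x ^ n = (T - u) ^ n * (1 - p) ^ n / T ^ n := by
      rw [hx, div_pow, mul_pow]
    have hlpow : (lam * (T - u)) ^ n = lam ^ n * (T - u) ^ n := mul_pow _ _ _
    rw [hexp, hxpow, hlpow]
    rw [pow_add (1 - p) j n, pow_add (lam * T) j n, mul_pow lam T n, mul_pow lam T j,
      div_pow (1 - p) (lam * T) j, mul_pow lam T j]
    have hTn : (T : ℝ) ^ n ≠ 0 := by positivity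
    have hln : (lam : ℝ) ^ n ≠ 0 := by positivity
    have hlj : (lam : ℝ) ^ j ≠ 0 := by positivity
    have hTj : (T : ℝ) ^ j ≠ 0 := by positivity
    field_simp
  rw [hrein, tsum_congr hterm, tsum_mul_left,
    tsum_gamma_series (by positivity) hx0 hx1, h1x]

/-- A Poisson random bridge whose terminal value has a negative binomial distribution
has negative binomial transition probabilities (and hence negative binomial
increments): for `0 ≤ s < t < T` and `i ≤ j`,
`ℚ[N_{tT} = j | N_{sT} = i]`, which equals `(∑_k φ_t(k;j)/∑_k φ_s(k;i)) Q_{t−s}(j−i)`,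
is given by
`C(j+m−1, j−i) [(p+(s/T)(1−p))/(p+(t/T)(1−p))]^{i+m} [((t−s)/T)(1−p)/(p+(t/T)(1−p))]^{j−i}`. -/
theorem poisson_random_bridge_negative_binomial (lam T s t m p : ℝ)
    (hlam : 0 < lam) (hT : 0 < T) (hs : 0 ≤ s) (hst : s < t) (htT : t < T)
    (hm : 0 < m) (hp0 : 0 < p) (hp1 : p < 1)
    (i j : ℕ) (hij : i ≤ j) :
    ((∑' k, prbPhi lam T (negBinPMF m p) t k j) /
        (∑' k, prbPhi lam T (negBinPMF m p) s k i)) * poissonPMF lam (t - s) (j - i)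
      = (Real.Gamma ((j : ℝ) + m) /
            (Real.Gamma ((j : ℝ) - (i : ℝ) + 1) * Real.Gamma ((i : ℝ) + m))) *
          ((p + (s / T) * (1 - p)) / (p + (t / T) * (1 - p))) ^ ((i : ℝ) + m) *
          (((t - s) / T * (1 - p)) / (p + (t / T) * (1 - p))) ^ (j - i) := by
  have h1p : 0 < 1 - p := by linarith
  have ht0 : 0 ≤ t := le_trans hs hst.le
  set a : ℝ := p + s / T * (1 - p) with ha
  set b : ℝ := p + t / T * (1 - p) with hb
  have ha0 : 0 < a := by
    rw [ha]
    have : 0 ≤ s / T * (1 - p) := mul_nonneg (div_nonneg hs hT.le) h1p.le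
    linarith
  have hb0 : 0 < b := by
    rw [hb]
    have : 0 ≤ t / T * (1 - p) := mul_nonneg (div_nonneg ht0 hT.le) h1p.le
    linarith
  rw [tsum_prbPhi_negBin hlam hT hm hp0 hp1 ht0 htT j,
    tsum_prbPhi_negBin hlam hT hm hp0 hp1 hs (hst.trans htT) i]
  rw [poissonPMF]
  -- nonzero denominators / atoms
  have hΓm : Real.Gamma m ≠ 0 := (Real.Gamma_pos_of_pos hm).ne'
  have hΓim : 0 < Real.Gamma ((i : ℝ) + m) := Real.Gamma_pos_of_pos (by positivity)
  have hΓjm : 0 < Real.Gamma ((j : ℝ) + m) := Real.Gamma_pos_of_pos (by positivity)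
  -- Gamma (j - i + 1) = (j-i)!
  have hΓd : Real.Gamma ((j : ℝ) - (i : ℝ) + 1) = (((j - i : ℕ)).factorial : ℝ) := by
    rw [show (j : ℝ) - (i : ℝ) + 1 = ((j - i : ℕ) : ℝ) + 1 by push_cast [hij]; ring,
      Real.Gamma_nat_eq_factorial]
  rw [hΓd]
  -- split exponential
  have hexp : Real.exp (lam * t) = Real.exp (lam * s) * Real.exp (lam * (t - s)) := by
    rw [← Real.exp_add]; ring_nf
  have hexp2 : Real.exp (-(lam * (t - s))) = (Real.exp (lam * (t - s)))⁻¹ := by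
    rw [← Real.exp_neg]
  -- split powers of c = (1-p)/(lam T)
  have hcpow : ((1 - p) / (lam * T)) ^ j
      = ((1 - p) / (lam * T)) ^ i * ((1 - p) / (lam * T)) ^ (j - i) := by
    rw [← pow_add]; congr 1; omega
  -- combine (lam (t-s))^(j-i) * c^(j-i)
  have hcomb : (lam * (t - s)) ^ (j - i) * ((1 - p) / (lam * T)) ^ (j - i)
      = ((t - s) / T * (1 - p)) ^ (j - i) := by
    rw [← mul_pow]; congr 1; field_simp
  -- rpow splitting on b
  have hb1 : b ^ (-((j : ℝ) + m))
      = b ^ (-((i : ℝ) + m)) * (b ^ (j - i : ℕ))⁻¹ := by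
    rw [← Real.rpow_natCast b (j - i), ← Real.rpow_neg hb0.le, ← Real.rpow_add hb0]
    congr 1
    push_cast [hij]
    ring
  -- rpow of quotient on RHS
  have hab : (a / b) ^ ((i : ℝ) + m) = a ^ ((i : ℝ) + m) * (b ^ ((i : ℝ) + m))⁻¹ := by
    rw [Real.div_rpow ha0.le hb0.le, div_eq_mul_inv]
  have hbneg : b ^ (-((i : ℝ) + m)) = (b ^ ((i : ℝ) + m))⁻¹ := Real.rpow_neg hb0.le _
  have haneg : a ^ (-((i : ℝ) + m)) = (a ^ ((i : ℝ) + m))⁻¹ := Real.rpow_neg ha0.le _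
  -- nonvanishing
  have hE1 : Real.exp (lam * s) ≠ 0 := Real.exp_ne_zero _
  have hE2 : Real.exp (lam * (t - s)) ≠ 0 := Real.exp_ne_zero _
  have hpm : (0:ℝ) < p ^ m := Real.rpow_pos_of_pos hp0 m
  have hci : ((1 - p) / (lam * T)) ^ i ≠ 0 := by positivity
  have hfac : (((j - i : ℕ)).factorial : ℝ) ≠ 0 := by positivity
  have harp : (0:ℝ) < a ^ ((i : ℝ) + m) := Real.rpow_pos_of_pos ha0 _
  have hbrp : (0:ℝ) < b ^ ((i : ℝ) + m) := Real.rpow_pos_of_pos hb0 _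
  have hbd : (0:ℝ) < b ^ (j - i : ℕ) := by positivity
  rw [hexp, hexp2, hcpow, hb1, hab, hbneg, haneg, div_pow (((t - s)) / T * (1 - p)) b (j - i)]
  rw [div_mul_eq_mul_div, div_eq_iff (by positivity)]
  field_simp
  simp only [mul_pow]
  ring_nf
  rw [← mul_pow, ← mul_pow]
  congr 1
  linear_combination (T⁻¹ * (1 - p) * (t - s)) * mul_inv_cancel₀ hlam.ne'
end
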